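/- arXiv:1205.1166 — 7 statements merged into one kernel-verified Lean document; each statement's English description precedes it below -/
import Mathlib

section
/- Let A be an n×n real matrix with ‖e^{At}‖ ≤ N e^{-ωt} for t ≥ 0, and let g : ℝ^m × ℝ^n → ℝ^n be continuous, bounded by M₀, and Lipschitz with ‖g(x,y₁) − g(x,y₂)‖ ≤ L₃‖y₁ − y₂‖ for all x, y₁, y₂. If N L₃ − ω < 0, then for every bounded continuous function x : ℝ → ℝ^m there exists a unique bounded solution y : ℝ → ℝ^n of y' = Ay + g(x(t), y), and it satisfies the integral equation y(t) = ∫_{-∞}^{t} e^{A(t-s)} g(x(s), y(s)) ds. -/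
open MeasureTheory Set Filter

abbrev Eu (k : ℕ) := EuclideanSpace ℝ (Fin k)

noncomputable def eAt {n : ℕ} (A : Matrix (Fin n) (Fin n) ℝ) (t : ℝ) :
    Eu n →L[ℝ] Eu n :=
  Matrix.toEuclideanCLM (𝕜 := ℝ) (NormedSpace.exp (t • A))

noncomputable def mulA {n : ℕ} (A : Matrix (Fin n) (Fin n) ℝ) : Eu n →L[ℝ] Eu n :=
  Matrix.toEuclideanCLM (𝕜 := ℝ) A

open NormedSpace
open scoped Topology

noncomputable section Aux

instance euSMulComm {n : ℕ} : SMulCommClass ℝ (Eu n →L[ℝ] Eu n) (Eu n →L[ℝ] Eu n) :=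
  ⟨fun r f g => by
    ext v
    simp [ContinuousLinearMap.smul_apply, ContinuousLinearMap.mul_apply, _root_.map_smul]⟩

instance euTower {n : ℕ} : IsScalarTower ℝ (Eu n →L[ℝ] Eu n) (Eu n →L[ℝ] Eu n) :=
  ⟨fun r f g => by
    ext v
    simp [ContinuousLinearMap.smul_apply, ContinuousLinearMap.mul_apply, _root_.map_smul]⟩

/-- The one-parameter semigroup `e^{tB}` for a continuous linear map `B`. -/
def Ee {n : ℕ} (B : Eu n →L[ℝ] Eu n) (t : ℝ) : Eu n →L[ℝ] Eu n := exp (t • B)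

lemma eAt_eq {n : ℕ} (A : Matrix (Fin n) (Fin n) ℝ) (t : ℝ) :
    eAt A t = Ee (mulA A) t := by
  letI : SeminormedRing (Matrix (Fin n) (Fin n) ℝ) := Matrix.linftyOpSemiNormedRing
  letI : NormedRing (Matrix (Fin n) (Fin n) ℝ) := Matrix.linftyOpNormedRing
  letI : NormedAlgebra ℝ (Matrix (Fin n) (Fin n) ℝ) := Matrix.linftyOpNormedAlgebra
  letI : CompleteSpace (Matrix (Fin n) (Fin n) ℝ) := FiniteDimensional.complete ℝ _
  letI : NormedAlgebra ℚ (Matrix (Fin n) (Fin n) ℝ) := NormedAlgebra.restrictScalars ℚ ℝ _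
  letI : NormedAlgebra ℚ (Eu n →L[ℝ] Eu n) := NormedAlgebra.restrictScalars ℚ ℝ _
  have hc : Continuous ((Matrix.toEuclideanCLM (n := Fin n) (𝕜 := ℝ)).toRingEquiv :
      Matrix (Fin n) (Fin n) ℝ → (Eu n →L[ℝ] Eu n)) := by
    have : IsLinearMap ℝ (fun M : Matrix (Fin n) (Fin n) ℝ =>
        Matrix.toEuclideanCLM (𝕜 := ℝ) M) :=
      ⟨fun a b => map_add _ a b, fun c a => _root_.map_smul _ c a⟩
    exact LinearMap.continuous_of_finiteDimensional this.mk'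
  have h := NormedSpace.map_exp
    (Matrix.toEuclideanCLM (n := Fin n) (𝕜 := ℝ)).toRingEquiv hc (t • A)
  rw [eAt]
  refine h.trans (congrArg NormedSpace.exp ?_)
  show Matrix.toEuclideanCLM (𝕜 := ℝ) (t • A) = t • mulA A
  rw [_root_.map_smul]; rfl

section Esec
variable {n : ℕ} (B : Eu n →L[ℝ] Eu n)

lemma Ee_add (a b : ℝ) : Ee B (a + b) = Ee B a * Ee B b := by
  have h : (a + b) • B = a • B + b • B := add_smul a b B
  letI : NormedAlgebra ℚ (Eu n →L[ℝ] Eu n) := NormedAlgebra.restrictScalars ℚ ℝ _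
  rw [Ee, h, exp_add_of_commute (((Commute.refl B).smul_left a).smul_right b)]; rfl

lemma Ee_zero : Ee B 0 = 1 := by
  have h : (0 : ℝ) • B = 0 := zero_smul ℝ B
  rw [Ee, h, exp_zero]

lemma Ee_apply_Ee (a b : ℝ) (v : Eu n) : Ee B a (Ee B b v) = Ee B (a + b) v := by
  rw [Ee_add]; rfl

lemma Ee_deriv (t : ℝ) : HasDerivAt (Ee B) (B * Ee B t) t :=
  hasDerivAt_exp_smul_const' B t

lemma Ee_cont : Continuous (Ee B) := by
  have : Differentiable ℝ (Ee B) := fun t => (Ee_deriv B t).differentiableAt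
  exact this.continuous

lemma Ee_comm (t : ℝ) : Ee B t * B = B * Ee B t :=
  (((Commute.refl B).smul_left t).exp_left)

lemma Ee_apply_comm (t : ℝ) (v : Eu n) : Ee B t (B v) = B (Ee B t v) := by
  calc Ee B t (B v) = (Ee B t * B) v := rfl
    _ = (B * Ee B t) v := by rw [Ee_comm]
    _ = B (Ee B t v) := rfl

end Esec

section Scalar

lemma key_interval {ω : ℝ} (hω : ω ≠ 0) (y a : ℝ) :
    ∫ s in y..a, Real.exp (ω * s) = (Real.exp (ω * a) - Real.exp (ω * y)) / ω := by
  rw [intervalIntegral.integral_comp_mul_left (fun u => Real.exp u) hω, integral_exp]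
  rw [smul_eq_mul]; ring

lemma exp_integrableOn_Iic {ω : ℝ} (hω : 0 < ω) (a : ℝ) :
    IntegrableOn (fun s => Real.exp (ω * s)) (Iic a) := by
  refine integrableOn_Iic_of_intervalIntegral_norm_bounded (Real.exp (ω * a) / ω) a
    (fun y => ((Real.continuous_exp.comp
      (continuous_const.mul continuous_id)).integrableOn_Ioc)) tendsto_id ?_
  filter_upwards with y
  have h0 : ∀ s, ‖Real.exp (ω * s)‖ = Real.exp (ω * s) := fun s =>
    Real.norm_of_nonneg (Real.exp_pos _).le
  simp_rw [h0, key_interval hω.ne', id]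
  have h1 := (Real.exp_pos (ω * y)).le
  rw [div_le_div_iff₀ hω hω]
  nlinarith [Real.exp_pos (ω * a)]

lemma exp_integral_Iic {ω : ℝ} (hω : 0 < ω) (a : ℝ) :
    ∫ s in Iic a, Real.exp (ω * s) = Real.exp (ω * a) / ω := by
  refine tendsto_nhds_unique
    (intervalIntegral_tendsto_integral_Iic a (exp_integrableOn_Iic hω a) tendsto_id) ?_
  simp_rw [key_interval hω.ne']
  have h0 : Tendsto (fun y : ℝ => Real.exp (ω * y)) atBot (𝓝 0) :=
    Real.tendsto_exp_atBot.comp (tendsto_id.const_mul_atBot hω)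
  have := ((tendsto_const_nhds (x := Real.exp (ω * a))).sub h0).div_const ω
  simpa using this

end Scalar

section IntSec
variable {n : ℕ} {B : Eu n →L[ℝ] Eu n} {N ω : ℝ} (hω : 0 < ω)
  (hB : ∀ t : ℝ, 0 ≤ t → ‖Ee B t‖ ≤ N * Real.exp (-ω * t))
  {f : ℝ → Eu n} {C : ℝ} (hfc : Continuous f) (hf : ∀ s, ‖f s‖ ≤ C)
  {t a : ℝ} (hat : a ≤ t)

include hfc in
lemma cont_integrand : Continuous (fun s => Ee B (t - s) (f s)) := by
  have h1 : Continuous (fun s : ℝ => Ee B (t - s)) :=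
    (Ee_cont B).comp (continuous_const.sub continuous_id)
  exact isBoundedBilinearMap_apply.continuous.comp (h1.prodMk hfc)

include hB hf hat in
lemma norm_bound_ptwise : ∀ s ∈ Iic a,
    ‖Ee B (t - s) (f s)‖ ≤ (N * C * Real.exp (-ω * t)) * Real.exp (ω * s) := by
  intro s hs
  have h1 : ‖Ee B (t - s) (f s)‖ ≤ ‖Ee B (t - s)‖ * ‖f s‖ := (Ee B (t - s)).le_opNorm _
  have h2 : ‖Ee B (t - s)‖ ≤ N * Real.exp (-ω * (t - s)) := hB _ (by simp at hs; linarith)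
  have h3 : ‖Ee B (t - s)‖ * ‖f s‖ ≤ (N * Real.exp (-ω * (t - s))) * C :=
    mul_le_mul h2 (hf s) (norm_nonneg _) (le_trans (norm_nonneg _) h2)
  have h4 : -ω * (t - s) = -ω * t + ω * s := by ring
  calc ‖Ee B (t - s) (f s)‖ ≤ (N * Real.exp (-ω * (t - s))) * C := le_trans h1 h3
    _ = (N * C * Real.exp (-ω * t)) * Real.exp (ω * s) := by rw [h4, Real.exp_add]; ring

include hω hB hf hfc hat in
lemma int_on : IntegrableOn (fun s => Ee B (t - s) (f s)) (Iic a) := by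
  refine Integrable.mono' (((exp_integrableOn_Iic hω a).const_mul (N * C * Real.exp (-ω * t))))
    ((cont_integrand hfc).aestronglyMeasurable) ?_
  exact ae_restrict_of_forall_mem measurableSet_Iic (norm_bound_ptwise hB hf hat)

omit hfc in
include hω hB hf hat in
lemma norm_int_le :
    ‖∫ s in Iic a, Ee B (t - s) (f s)‖ ≤ N * C * Real.exp (-ω * (t - a)) / ω := by
  have h := norm_integral_le_of_norm_le
    (((exp_integrableOn_Iic hω a).const_mul (N * C * Real.exp (-ω * t))))
    (ae_restrict_of_forall_mem measurableSet_Iic (norm_bound_ptwise hB hf hat))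
  refine h.trans ?_
  rw [integral_const_mul, exp_integral_Iic hω a,
    show -ω * (t - a) = -ω * t + ω * a by ring, Real.exp_add,
    div_eq_mul_inv, div_eq_mul_inv]
  ring_nf
  exact le_refl _

end IntSec

set_option maxHeartbeats 1000000 in
theorem main {m n : ℕ} (B : Eu n →L[ℝ] Eu n) (N ω M₀ L₃ : ℝ)
    (hN : 0 < N) (hω : 0 < ω)
    (hB : ∀ t : ℝ, 0 ≤ t → ‖Ee B t‖ ≤ N * Real.exp (-ω * t))
    (g : Eu m → Eu n → Eu n)
    (hgc : Continuous fun p : Eu m × Eu n => g p.1 p.2)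
    (hgb : ∀ x y, ‖g x y‖ ≤ M₀)
    (hgl : ∀ x y₁ y₂, ‖g x y₁ - g x y₂‖ ≤ L₃ * ‖y₁ - y₂‖)
    (hcond : N * L₃ - ω < 0)
    (x : ℝ → Eu m) (hxc : Continuous x) :
    ∃ y : ℝ → Eu n,
      ((∃ Bd, ∀ t, ‖y t‖ ≤ Bd) ∧
        (∀ t, HasDerivAt y (B (y t) + g (x t) (y t)) t) ∧
        ∀ t, y t = ∫ s in Iic t, Ee B (t - s) (g (x s) (y s))) ∧
      ∀ z : ℝ → Eu n,
        (∃ Bd, ∀ t, ‖z t‖ ≤ Bd) →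
        (∀ t, HasDerivAt z (B (z t) + g (x t) (z t)) t) →
        z = y := by
  classical
  set L : ℝ := max L₃ 0 with hLdef
  have hL0 : 0 ≤ L := le_max_right _ _
  have hLω : N * L < ω := by
    rcases max_cases L₃ 0 with ⟨h1, _⟩ | ⟨h1, _⟩ <;> rw [hLdef, h1] <;> nlinarith
  have hM₀ : 0 ≤ M₀ := le_trans (norm_nonneg _) (hgb 0 0)
  have hgl' : ∀ u y₁ y₂, ‖g u y₁ - g u y₂‖ ≤ L * ‖y₁ - y₂‖ := fun u y₁ y₂ =>
    (hgl u y₁ y₂).trans (mul_le_mul_of_nonneg_right (le_max_left _ _) (norm_nonneg _))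
  -- the map F
  set Y := BoundedContinuousFunction ℝ (Eu n)
  have hFc : ∀ y : Y, Continuous (fun s => g (x s) (y s)) := fun y =>
    hgc.comp (hxc.prodMk y.continuous)
  have hFb : ∀ (y : Y) s, ‖g (x s) (y s)‖ ≤ M₀ := fun y s => hgb _ _
  set Tf : Y → ℝ → Eu n := fun y t => ∫ s in Iic t, Ee B (t - s) (g (x s) (y s)) with hTf
  -- integrability
  have hIntOn : ∀ (y : Y) (t a : ℝ), a ≤ t →
      IntegrableOn (fun s => Ee B (t - s) (g (x s) (y s))) (Iic a) := fun y t a hat =>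
    int_on hω hB (hFc y) (hFb y) hat
  -- bound
  have hTb : ∀ (y : Y) t, ‖Tf y t‖ ≤ N * M₀ / ω := by
    intro y t
    have := norm_int_le hω hB (hFb y) (le_refl t)
    simpa using this
  -- w and the derivative of Tf
  have main_deriv : ∀ y : Y, (Continuous (Tf y)) ∧
      (∀ t, HasDerivAt (Tf y) (B (Tf y t) + g (x t) (y t)) t) := by
    intro y
    set f : ℝ → Eu n := fun s => g (x s) (y s) with hf
    set w : ℝ → Eu n := fun t => ∫ s in Iic t, Ee B (-s) (f s) with hw
    have hwint : ∀ t : ℝ, IntegrableOn (fun s => Ee B (-s) (f s)) (Iic t) := by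
      intro t
      have hrw : (fun s => Ee B (-s) (f s))
          = fun s => Ee B (t - s) ((Ee B (-t)) (f s)) := by
        funext s
        rw [Ee_apply_Ee, show t - s + -t = -s by ring]
      rw [hrw]
      refine int_on hω hB ((Ee B (-t)).continuous.comp (hFc y)) (C := ‖Ee B (-t)‖ * M₀)
        (fun s => ?_) (le_refl t)
      exact le_trans ((Ee B (-t)).le_opNorm _)
        (mul_le_mul_of_nonneg_left (hFb y s) (norm_nonneg _))
    have hTfw : ∀ t, Tf y t = Ee B t (w t) := by
      intro t
      rw [hw]
      rw [← ContinuousLinearMap.integral_comp_comm (Ee B t) (hwint t)]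
      refine setIntegral_congr_fun measurableSet_Iic (fun s _ => ?_)
      rw [Ee_apply_Ee, show t + -s = t - s by ring]
    have hwc : Continuous fun s : ℝ => Ee B (-s) (f s) := by
      have h1 : Continuous (fun s : ℝ => Ee B (-s)) :=
        (Ee_cont B).comp continuous_neg
      exact isBoundedBilinearMap_apply.continuous.comp (h1.prodMk (hFc y))
    have hwderiv : ∀ t, HasDerivAt w (Ee B (-t) (f t)) t := by
      intro t
      have hsub : ∀ u : ℝ, w u = w 0 + ∫ s in (0:ℝ)..u, Ee B (-s) (f s) := by
        intro u
        have h := intervalIntegral.integral_Iic_sub_Iic (hwint 0) (hwint u)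
        rw [hw]
        rw [← h]
        abel
      rw [funext hsub]
      have hFTC : HasDerivAt (fun u => ∫ s in (0:ℝ)..u, Ee B (-s) (f s))
          (Ee B (-t) (f t)) t := by
        refine intervalIntegral.integral_hasDerivAt_right
          (hwc.intervalIntegrable _ _) ?_ hwc.continuousAt
        exact hwc.stronglyMeasurableAtFilter _ _
      simpa using hFTC.const_add (w 0)
    have hTderiv : ∀ t, HasDerivAt (Tf y) (B (Tf y t) + f t) t := by
      intro t
      have h1 : HasDerivAt (fun u => Ee B u (w u))
          ((B * Ee B t) (w t) + Ee B t (Ee B (-t) (f t))) t :=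
        (Ee_deriv B t).clm_apply (hwderiv t)
      have h2 : (B * Ee B t) (w t) = B (Tf y t) := by
        rw [hTfw t]; rfl
      have h3 : Ee B t (Ee B (-t) (f t)) = f t := by
        rw [Ee_apply_Ee, show t + -t = (0:ℝ) by ring, Ee_zero]; rfl
      have h4 : Tf y = fun u => Ee B u (w u) := funext hTfw
      rw [h4]
      rw [h2, h3] at h1
      rw [← h4] at h1 ⊢
      exact h1
    exact ⟨continuous_iff_continuousAt.mpr (fun t => (hTderiv t).continuousAt), hTderiv⟩
  -- define T as a self-map of Y
  set T : Y → Y := fun y => BoundedContinuousFunction.ofNormedAddCommGroup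
    (Tf y) (main_deriv y).1 (N * M₀ / ω) (hTb y) with hT
  have hTapp : ∀ (y : Y) t, T y t = Tf y t := fun y t => rfl
  -- contraction
  set K : NNReal := Real.toNNReal (N * L / ω) with hK
  have hKcoe : (K : ℝ) = N * L / ω := by
    rw [hK, Real.coe_toNNReal]
    positivity
  have hKlt : K < 1 := by
    have h1 : (K : ℝ) < (1 : ℝ) := by
      rw [hKcoe, div_lt_one hω]; exact hLω
    exact_mod_cast h1
  have hLip : ∀ y₁ y₂ : Y, dist (T y₁) (T y₂) ≤ K * dist y₁ y₂ := by
    intro y₁ y₂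
    refine BoundedContinuousFunction.dist_le (by positivity) |>.mpr (fun t => ?_)
    rw [hTapp, hTapp, dist_eq_norm]
    have hsub : Tf y₁ t - Tf y₂ t
        = ∫ s in Iic t, Ee B (t - s) (g (x s) (y₁ s) - g (x s) (y₂ s)) := by
      rw [hTf]
      rw [← integral_sub (hIntOn y₁ t t (le_refl t)) (hIntOn y₂ t t (le_refl t))]
      refine setIntegral_congr_fun measurableSet_Iic (fun s _ => ?_)
      rw [map_sub]
    have hd : ∀ s, ‖g (x s) (y₁ s) - g (x s) (y₂ s)‖ ≤ L * dist y₁ y₂ := by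
      intro s
      refine (hgl' (x s) _ _).trans ?_
      have : ‖y₁ s - y₂ s‖ ≤ dist y₁ y₂ := by
        rw [← dist_eq_norm]
        exact BoundedContinuousFunction.dist_coe_le_dist s
      exact mul_le_mul_of_nonneg_left this hL0
    have hcont : Continuous fun s => g (x s) (y₁ s) - g (x s) (y₂ s) :=
      (hFc y₁).sub (hFc y₂)
    have h := norm_int_le hω hB hd (le_refl t)
    rw [hsub]
    refine h.trans ?_
    rw [hKcoe, show t - t = (0:ℝ) by ring, mul_zero, Real.exp_zero]
    apply le_of_eq
    ring
  have hCW : ContractingWith K T := ⟨hKlt, LipschitzWith.of_dist_le_mul hLip⟩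
  set yy : Y := hCW.fixedPoint T with hyy
  have hfix : T yy = yy := hCW.fixedPoint_isFixedPt
  have heq : ∀ t, yy t = Tf yy t := by
    intro t
    conv_lhs => rw [← hfix]
    exact hTapp yy t
  have hyderiv : ∀ t, HasDerivAt (⇑yy) (B (yy t) + g (x t) (yy t)) t := by
    intro t
    have h := (main_deriv yy).2 t
    have h4 : Tf yy = ⇑yy := (funext heq).symm
    rw [h4] at h
    exact h
  refine ⟨⇑yy, ⟨⟨‖yy‖, fun t => yy.norm_coe_le_norm t⟩, hyderiv, heq⟩, ?_⟩
  -- uniqueness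
  rintro z ⟨Bz, hzb⟩ hz
  have hzc : Continuous z := continuous_iff_continuousAt.mpr (fun t => (hz t).continuousAt)
  set zb : Y := BoundedContinuousFunction.ofNormedAddCommGroup z hzc Bz hzb with hzbdef
  have hzbco : ⇑zb = z := rfl
  have hfz : ∀ t, z t = Tf zb t := by
    intro t
    -- derivative of s ↦ Ee B (t-s) (z s)
    have hφ : ∀ s : ℝ, HasDerivAt (fun u => Ee B (t - u) (z u))
        (Ee B (t - s) (g (x s) (z s))) s := by
      intro s
      have hh : HasDerivAt (fun u : ℝ => t - u) (-1 : ℝ) s := (hasDerivAt_id s).const_sub t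
      have hE : HasDerivAt (fun u : ℝ => Ee B (t - u)) ((-1 : ℝ) • (B * Ee B (t - s))) s :=
        HasDerivAt.scomp s (Ee_deriv B (t - s)) hh
      have h2 := hE.clm_apply (hz s)
      have h3 : ((-1 : ℝ) • (B * Ee B (t - s))) (z s)
          + Ee B (t - s) (B (z s) + g (x s) (z s)) = Ee B (t - s) (g (x s) (z s)) := by
        rw [map_add, ContinuousLinearMap.smul_apply, Ee_apply_comm]
        have : (B * Ee B (t - s)) (z s) = B (Ee B (t - s) (z s)) := rfl
        rw [this]
        module
      rw [h3] at h2
      exact h2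
    have hFzc : Continuous fun s => g (x s) (z s) := hgc.comp (hxc.prodMk hzc)
    have hFzb : ∀ s, ‖g (x s) (z s)‖ ≤ M₀ := fun s => hgb _ _
    have hcont2 : Continuous fun s => Ee B (t - s) (g (x s) (z s)) := cont_integrand hFzc
    have hftc : ∀ a : ℝ, a ≤ t →
        z t = (∫ s in a..t, Ee B (t - s) (g (x s) (z s))) + Ee B (t - a) (z a) := by
      intro a hat
      have h := intervalIntegral.integral_eq_sub_of_hasDerivAt
        (f := fun u => Ee B (t - u) (z u)) (fun s _ => hφ s)
        (hcont2.intervalIntegrable a t)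
      simp only [sub_self, Ee_zero, ContinuousLinearMap.one_apply] at h
      rw [h]
      abel
    -- limits
    have hlim1 : Tendsto (fun a => ∫ s in a..t, Ee B (t - s) (g (x s) (z s))) atBot
        (𝓝 (∫ s in Iic t, Ee B (t - s) (g (x s) (z s)))) :=
      intervalIntegral_tendsto_integral_Iic t (int_on hω hB hFzc hFzb (le_refl t)) tendsto_id
    have hlim2 : Tendsto (fun a => Ee B (t - a) (z a)) atBot (𝓝 0) := by
      have hb : ∀ᶠ a in atBot, ‖Ee B (t - a) (z a)‖
          ≤ (N * Bz * Real.exp (-ω * t)) * Real.exp (ω * a) := by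
        filter_upwards [eventually_le_atBot t] with a ha
        have h1 : ‖Ee B (t - a) (z a)‖ ≤ ‖Ee B (t - a)‖ * ‖z a‖ := (Ee B (t - a)).le_opNorm _
        have h2 : ‖Ee B (t - a)‖ ≤ N * Real.exp (-ω * (t - a)) := hB _ (by linarith)
        have h3 := mul_le_mul h2 (hzb a) (norm_nonneg _) (le_trans (norm_nonneg _) h2)
        refine (le_trans h1 h3).trans (le_of_eq ?_)
        rw [show -ω * (t - a) = -ω * t + ω * a by ring, Real.exp_add]
        ring
      have h0 : Tendsto (fun a : ℝ => (N * Bz * Real.exp (-ω * t)) * Real.exp (ω * a))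
          atBot (𝓝 0) := by
        have := (Real.tendsto_exp_atBot.comp
          (tendsto_id.const_mul_atBot hω)).const_mul (N * Bz * Real.exp (-ω * t))
        simpa using this
      exact squeeze_zero_norm' hb h0
    have hcombined : Tendsto (fun a => (∫ s in a..t, Ee B (t - s) (g (x s) (z s)))
        + Ee B (t - a) (z a)) atBot
        (𝓝 ((∫ s in Iic t, Ee B (t - s) (g (x s) (z s))) + 0)) := hlim1.add hlim2
    rw [add_zero] at hcombined
    have hconst : Tendsto (fun _ : ℝ => z t) atBot (𝓝 (z t)) := tendsto_const_nhds
    have : Tendsto (fun a => (∫ s in a..t, Ee B (t - s) (g (x s) (z s)))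
        + Ee B (t - a) (z a)) atBot (𝓝 (z t)) := by
      refine Tendsto.congr' ?_ hconst
      filter_upwards [eventually_le_atBot t] with a ha
      exact hftc a ha
    exact tendsto_nhds_unique this hcombined
  have hTz : T zb = zb := by
    refine BoundedContinuousFunction.ext (fun t => ?_)
    rw [hTapp]
    exact (hfz t).symm
  have hzy : zb = yy := hCW.fixedPoint_unique hTz
  funext t
  calc z t = zb t := rfl
    _ = yy t := by rw [hzy]

end Aux

/-- Existence and uniqueness of the bounded solution of y' = Ay + g(x(t),y),
together with its integral representation. -/
theorem stmt2 {m n : ℕ} (A : Matrix (Fin n) (Fin n) ℝ) (N ω M₀ L₃ : ℝ)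
    (hN : 0 < N) (hω : 0 < ω)
    (hA : ∀ t : ℝ, 0 ≤ t → ‖eAt A t‖ ≤ N * Real.exp (-ω * t))
    (g : Eu m → Eu n → Eu n)
    (hgc : Continuous fun p : Eu m × Eu n => g p.1 p.2)
    (hgb : ∀ x y, ‖g x y‖ ≤ M₀)
    (hgl : ∀ x y₁ y₂, ‖g x y₁ - g x y₂‖ ≤ L₃ * ‖y₁ - y₂‖)
    (hcond : N * L₃ - ω < 0)
    (x : ℝ → Eu m) (hxc : Continuous x) (hxb : ∃ H, ∀ t, ‖x t‖ ≤ H) :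
    ∃ y : ℝ → Eu n,
      ((∃ B, ∀ t, ‖y t‖ ≤ B) ∧
        (∀ t, HasDerivAt y (mulA A (y t) + g (x t) (y t)) t) ∧
        ∀ t, y t = ∫ s in Iic t, eAt A (t - s) (g (x s) (y s))) ∧
      ∀ z : ℝ → Eu n,
        (∃ B, ∀ t, ‖z t‖ ≤ B) →
        (∀ t, HasDerivAt z (mulA A (z t) + g (x t) (z t)) t) →
        z = y := by
  have hB : ∀ t : ℝ, 0 ≤ t → ‖Ee (mulA A) t‖ ≤ N * Real.exp (-ω * t) := by
    intro t ht
    rw [← eAt_eq]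
    exact hA t ht
  obtain ⟨y, ⟨hb, hd, hi⟩, huniq⟩ :=
    main (mulA A) N ω M₀ L₃ hN hω hB g hgc hgb hgl hcond x hxc
  refine ⟨y, ⟨hb, hd, fun t => ?_⟩, huniq⟩
  rw [hi t]
  refine setIntegral_congr_fun measurableSet_Iic (fun s _ => ?_)
  rw [eAt_eq]
end

section
/- Under assumptions (A5) and (A7), if x : ℝ → ℝ^m and x̄ : ℝ → ℝ^m are bounded continuous functions with ‖x(t) − x̄(t)‖ → 0 as t → ∞, and y, ȳ are the corresponding unique bounded solutions of y' = Ay + g(x(t), y) and ȳ' = Aȳ + g(x̄(t), ȳ), then ‖y(t) − ȳ(t)‖ → 0 as t → ∞. -/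
open MeasureTheory Set Filter

section Aux

attribute [local instance] Matrix.linftyOpNormedRing Matrix.linftyOpNormedAlgebra
  Matrix.linftyOpNormedAddCommGroup

lemma expIntAux {ω : ℝ} (hω : 0 < ω) (c : ℝ) :
    IntegrableOn (fun s => Real.exp (ω * s)) (Iic c) := by
  have h0 : Integrable ((Iic (ω * c)).indicator Real.exp) :=
    (integrableOn_exp_Iic (ω * c)).integrable_indicator measurableSet_Iic
  have h1 := h0.comp_mul_left' hω.ne'
  have h2 : (fun s => (Iic (ω * c)).indicator Real.exp (ω * s))
      = (Iic c).indicator fun s => Real.exp (ω * s) := by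
    funext s
    simp only [indicator, mem_Iic, mul_le_mul_iff_right₀ hω]
  rw [h2] at h1
  exact (integrable_indicator_iff measurableSet_Iic).1 h1

lemma expIntegralAux {ω : ℝ} (hω : 0 < ω) (c : ℝ) :
    ∫ s in Iic c, Real.exp (ω * s) = Real.exp (ω * c) / ω := by
  have hderiv : ∀ s ∈ Iic c,
      HasDerivAt (fun r => Real.exp (ω * r) / ω) (Real.exp (ω * s)) s := by
    intro s _
    have h := ((Real.hasDerivAt_exp (ω * s)).comp s
      ((hasDerivAt_id s).const_mul ω)).div_const ω
    refine h.congr_deriv ?_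
    field_simp
  have htend : Tendsto (fun s => Real.exp (ω * s) / ω) atBot (nhds 0) := by
    have h1 : Tendsto (fun s : ℝ => ω * s) atBot atBot :=
      (tendsto_const_mul_atBot_of_pos hω).2 tendsto_id
    have := (Real.tendsto_exp_atBot.comp h1).div_const ω
    simpa using this
  have := integral_Iic_of_hasDerivAt_of_tendsto' hderiv (expIntAux hω c) htend
  simpa using this

lemma heAtcAux {n : ℕ} (A : Matrix (Fin n) (Fin n) ℝ) :
    Continuous fun r : ℝ => eAt A r := by
  have hc1 : Continuous fun r : ℝ => NormedSpace.exp (r • A) :=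
    NormedSpace.exp_continuous.comp (continuous_id.smul continuous_const)
  have hL : Continuous fun M : Matrix (Fin n) (Fin n) ℝ =>
      (Matrix.toEuclideanCLM (𝕜 := ℝ) M : Eu n →L[ℝ] Eu n) := by
    let L : Matrix (Fin n) (Fin n) ℝ →ₗ[ℝ] (Eu n →L[ℝ] Eu n) :=
      { toFun := fun M => Matrix.toEuclideanCLM (𝕜 := ℝ) M
        map_add' := fun a b => by simp
        map_smul' := fun c a => by simp }
    exact L.continuous_of_finiteDimensional
  exact hL.comp hc1

end Aux

/-- Convergence as t → ∞ of the driving functions implies convergence of the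
corresponding bounded solutions of the replicator equation. -/
theorem stmt3 {m n : ℕ} (A : Matrix (Fin n) (Fin n) ℝ) (N ω M₀ L₂ L₃ : ℝ)
    (hN : 0 < N) (hω : 0 < ω) (hL₂ : 0 < L₂) (hL₃ : 0 < L₃)
    (hA : ∀ t : ℝ, 0 ≤ t → ‖eAt A t‖ ≤ N * Real.exp (-ω * t))
    (g : Eu m → Eu n → Eu n)
    (hgc : Continuous fun p : Eu m × Eu n => g p.1 p.2)
    (hgb : ∀ x y, ‖g x y‖ ≤ M₀)
    (hg₂ : ∀ x₁ x₂ y, ‖g x₁ y - g x₂ y‖ ≤ L₂ * ‖x₁ - x₂‖)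
    (hg₃ : ∀ x y₁ y₂, ‖g x y₁ - g x y₂‖ ≤ L₃ * ‖y₁ - y₂‖)
    (hcond : N * L₃ - ω < 0)
    (x xb : ℝ → Eu m) (hxc : Continuous x) (hxbc : Continuous xb)
    (hxB : ∃ H, ∀ t, ‖x t‖ ≤ H) (hxbB : ∃ H, ∀ t, ‖xb t‖ ≤ H)
    (hconv : Tendsto (fun t => ‖x t - xb t‖) atTop (nhds 0))
    (y yb : ℝ → Eu n)
    (hyB : ∃ B, ∀ t, ‖y t‖ ≤ B) (hybB : ∃ B, ∀ t, ‖yb t‖ ≤ B)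
    (hy : ∀ t, HasDerivAt y (mulA A (y t) + g (x t) (y t)) t)
    (hyint : ∀ t, y t = ∫ s in Iic t, eAt A (t - s) (g (x s) (y s)))
    (hyb : ∀ t, HasDerivAt yb (mulA A (yb t) + g (xb t) (yb t)) t)
    (hybint : ∀ t, yb t = ∫ s in Iic t, eAt A (t - s) (g (xb s) (yb s))) :
    Tendsto (fun t => ‖y t - yb t‖) atTop (nhds 0) := by
  obtain ⟨B₁, hB₁⟩ := hyB
  obtain ⟨B₂, hB₂⟩ := hybB
  have hyc : Continuous y := continuous_iff_continuousAt.2 fun t => (hy t).continuousAt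
  have hybc : Continuous yb := continuous_iff_continuousAt.2 fun t => (hyb t).continuousAt
  have hM₀ : 0 ≤ M₀ := le_trans (norm_nonneg _) (hgb 0 0)
  set G : ℝ → Eu n := fun s => g (x s) (y s) - g (xb s) (yb s) with hGdef
  have hGc : Continuous G :=
    (hgc.comp (hxc.prodMk hyc)).sub (hgc.comp (hxbc.prodMk hybc))
  have hGb : ∀ s, ‖G s‖ ≤ 2 * M₀ := by
    intro s
    calc ‖G s‖ ≤ ‖g (x s) (y s)‖ + ‖g (xb s) (yb s)‖ := norm_sub_le _ _
    _ ≤ 2 * M₀ := by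
        have h1 := hgb (x s) (y s); have h2 := hgb (xb s) (yb s); linarith
  have hGL : ∀ s, ‖G s‖ ≤ L₂ * ‖x s - xb s‖ + L₃ * ‖y s - yb s‖ := by
    intro s
    have hsplit : G s = (g (x s) (y s) - g (x s) (yb s)) +
        (g (x s) (yb s) - g (xb s) (yb s)) := by
      rw [hGdef]; abel
    calc ‖G s‖ ≤ ‖g (x s) (y s) - g (x s) (yb s)‖ + ‖g (x s) (yb s) - g (xb s) (yb s)‖ := by
          rw [hsplit]; exact norm_add_le _ _
    _ ≤ L₃ * ‖y s - yb s‖ + L₂ * ‖x s - xb s‖ :=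
        add_le_add (hg₃ _ _ _) (hg₂ _ _ _)
    _ = L₂ * ‖x s - xb s‖ + L₃ * ‖y s - yb s‖ := by ring
  have heAtc : Continuous fun r : ℝ => eAt A r := heAtcAux A
  -- integrability
  have hInt : ∀ (t : ℝ) (w : ℝ → Eu n), Continuous w → ∀ C : ℝ, (∀ s, ‖w s‖ ≤ C) →
      IntegrableOn (fun s => eAt A (t - s) (w s)) (Iic t) := by
    intro t w hwc C hwB
    have hCnn : (0:ℝ) ≤ C := le_trans (norm_nonneg _) (hwB 0)
    have hmeas : AEStronglyMeasurable (fun s => eAt A (t - s) (w s))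
        (volume.restrict (Iic t)) :=
      (Continuous.clm_apply (heAtc.comp (continuous_const.sub continuous_id)) hwc
        ).aestronglyMeasurable
    refine Integrable.mono' ((expIntAux hω t).const_mul (N * C * Real.exp (-ω * t)))
      hmeas ?_
    refine (ae_restrict_iff' measurableSet_Iic).2 (Eventually.of_forall fun s hs => ?_)
    have hts : (0:ℝ) ≤ t - s := sub_nonneg.2 hs
    calc ‖eAt A (t - s) (w s)‖ ≤ ‖eAt A (t - s)‖ * ‖w s‖ :=
        (eAt A (t - s)).le_opNorm _
    _ ≤ (N * Real.exp (-ω * (t - s))) * C :=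
        mul_le_mul (hA _ hts) (hwB s) (norm_nonneg _) (by positivity)
    _ = N * C * Real.exp (-ω * t) * Real.exp (ω * s) := by
        rw [show -ω * (t - s) = -ω * t + ω * s by ring, Real.exp_add]; ring
  have hgxyc : Continuous fun s => g (x s) (y s) := hgc.comp (hxc.prodMk hyc)
  have hgxybc : Continuous fun s => g (xb s) (yb s) := hgc.comp (hxbc.prodMk hybc)
  have hrepr : ∀ t, y t - yb t = ∫ s in Iic t, eAt A (t - s) (G s) := by
    intro t
    have h1 := hInt t _ hgxyc M₀ fun s => hgb _ _
    have h2 := hInt t _ hgxybc M₀ fun s => hgb _ _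
    have hmap : ∀ s : ℝ, eAt A (t - s) (G s)
        = eAt A (t - s) (g (x s) (y s)) - eAt A (t - s) (g (xb s) (yb s)) := fun s =>
      map_sub _ _ _
    rw [hyint t, hybint t]
    simp_rw [hmap]
    rw [integral_sub h1 h2]
  -- key quantitative estimate
  have key : ∀ (ε K T : ℝ), 0 ≤ ε → 0 ≤ K →
      (∀ s, T ≤ s → ‖x s - xb s‖ ≤ ε) → (∀ s, T ≤ s → ‖y s - yb s‖ ≤ K) →
      ∀ t, T ≤ t → ‖y t - yb t‖ ≤
        2 * M₀ * N / ω * Real.exp (-ω * (t - T)) + N * (L₂ * ε + L₃ * K) / ω := by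
    intro ε K T hε hK hxε huK t hTt
    have hExpC : ∀ (c C : ℝ), IntegrableOn (fun s => C * Real.exp (ω * s)) (Iic c) :=
      fun c C => (expIntAux hω c).const_mul C
    have hIntG : IntegrableOn (fun s => eAt A (t - s) (G s)) (Iic t) :=
      hInt t G hGc (2 * M₀) hGb
    have hIntGn : IntegrableOn (fun s => ‖eAt A (t - s) (G s)‖) (Iic t) := hIntG.norm
    have h0 : ‖∫ s in Iic t, eAt A (t - s) (G s)‖
        ≤ ∫ s in Iic t, ‖eAt A (t - s) (G s)‖ := norm_integral_le_integral_norm _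
    have hsplit : (∫ s in Iic t, ‖eAt A (t - s) (G s)‖)
        = (∫ s in Iic T, ‖eAt A (t - s) (G s)‖)
          + ∫ s in Ioc T t, ‖eAt A (t - s) (G s)‖ := by
      rw [← setIntegral_union (Iic_disjoint_Ioc le_rfl) measurableSet_Ioc
        (hIntGn.mono_set (Iic_subset_Iic.2 hTt)) (hIntGn.mono_set Ioc_subset_Iic_self),
        Iic_union_Ioc_eq_Iic hTt]
    have hb1 : (∫ s in Iic T, ‖eAt A (t - s) (G s)‖)
        ≤ 2 * M₀ * N / ω * Real.exp (-ω * (t - T)) := by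
      have hle : ∀ s ∈ Iic T, ‖eAt A (t - s) (G s)‖
          ≤ (2 * M₀ * N * Real.exp (-ω * t)) * Real.exp (ω * s) := by
        intro s hs
        have hts : (0:ℝ) ≤ t - s := sub_nonneg.2 (le_trans hs hTt)
        calc ‖eAt A (t - s) (G s)‖ ≤ ‖eAt A (t - s)‖ * ‖G s‖ :=
            (eAt A (t - s)).le_opNorm _
        _ ≤ (N * Real.exp (-ω * (t - s))) * (2 * M₀) :=
            mul_le_mul (hA _ hts) (hGb s) (norm_nonneg _) (by positivity)
        _ = (2 * M₀ * N * Real.exp (-ω * t)) * Real.exp (ω * s) := by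
            rw [show -ω * (t - s) = -ω * t + ω * s by ring, Real.exp_add]; ring
      calc (∫ s in Iic T, ‖eAt A (t - s) (G s)‖)
          ≤ ∫ s in Iic T, (2 * M₀ * N * Real.exp (-ω * t)) * Real.exp (ω * s) :=
            setIntegral_mono_on (hIntGn.mono_set (Iic_subset_Iic.2 hTt))
              (hExpC T _) measurableSet_Iic hle
      _ = (2 * M₀ * N * Real.exp (-ω * t)) * (Real.exp (ω * T) / ω) := by
            rw [integral_const_mul, expIntegralAux hω T]
      _ = 2 * M₀ * N / ω * Real.exp (-ω * (t - T)) := by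
            rw [show -ω * (t - T) = -ω * t + ω * T by ring, Real.exp_add]; ring
    have hb2 : (∫ s in Ioc T t, ‖eAt A (t - s) (G s)‖) ≤ N * (L₂ * ε + L₃ * K) / ω := by
      have hle : ∀ s ∈ Ioc T t, ‖eAt A (t - s) (G s)‖
          ≤ (N * (L₂ * ε + L₃ * K) * Real.exp (-ω * t)) * Real.exp (ω * s) := by
        intro s hs
        obtain ⟨hTs, hst⟩ := hs
        have hts : (0:ℝ) ≤ t - s := sub_nonneg.2 hst
        have hGs : ‖G s‖ ≤ L₂ * ε + L₃ * K :=
          (hGL s).trans (add_le_add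
            (mul_le_mul_of_nonneg_left (hxε s hTs.le) hL₂.le)
            (mul_le_mul_of_nonneg_left (huK s hTs.le) hL₃.le))
        calc ‖eAt A (t - s) (G s)‖ ≤ ‖eAt A (t - s)‖ * ‖G s‖ :=
            (eAt A (t - s)).le_opNorm _
        _ ≤ (N * Real.exp (-ω * (t - s))) * (L₂ * ε + L₃ * K) :=
            mul_le_mul (hA _ hts) hGs (norm_nonneg _) (by positivity)
        _ = (N * (L₂ * ε + L₃ * K) * Real.exp (-ω * t)) * Real.exp (ω * s) := by
            rw [show -ω * (t - s) = -ω * t + ω * s by ring, Real.exp_add]; ring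
      have hmono : (∫ s in Ioc T t, (N * (L₂ * ε + L₃ * K) * Real.exp (-ω * t)) * Real.exp (ω * s))
          ≤ ∫ s in Iic t, (N * (L₂ * ε + L₃ * K) * Real.exp (-ω * t)) * Real.exp (ω * s) :=
        setIntegral_mono_set (hExpC t _)
          (Eventually.of_forall fun s => by positivity)
          (HasSubset.Subset.eventuallyLE Ioc_subset_Iic_self)
      calc (∫ s in Ioc T t, ‖eAt A (t - s) (G s)‖)
          ≤ ∫ s in Ioc T t, (N * (L₂ * ε + L₃ * K) * Real.exp (-ω * t)) * Real.exp (ω * s) :=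
            setIntegral_mono_on (hIntGn.mono_set Ioc_subset_Iic_self)
              ((hExpC t _).mono_set Ioc_subset_Iic_self)
              measurableSet_Ioc hle
      _ ≤ ∫ s in Iic t, (N * (L₂ * ε + L₃ * K) * Real.exp (-ω * t)) * Real.exp (ω * s) := hmono
      _ = N * (L₂ * ε + L₃ * K) / ω := by
            rw [integral_const_mul, expIntegralAux hω t,
              show N * (L₂ * ε + L₃ * K) * Real.exp (-ω * t) * (Real.exp (ω * t) / ω)
                = N * (L₂ * ε + L₃ * K) * (Real.exp (-ω * t + ω * t)) / ω from by
                  rw [Real.exp_add]; ring]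
            simp
    rw [hrepr t]
    calc ‖∫ s in Iic t, eAt A (t - s) (G s)‖ ≤ ∫ s in Iic t, ‖eAt A (t - s) (G s)‖ := h0
    _ = _ := hsplit
    _ ≤ _ := add_le_add hb1 hb2
  -- limsup argument
  set φ : ℝ → ℝ := fun t => ‖y t - yb t‖ with hφdef
  have hφ0 : ∀ t, 0 ≤ φ t := fun t => norm_nonneg _
  have hφB : ∀ t, φ t ≤ B₁ + B₂ := fun t =>
    (norm_sub_le _ _).trans (add_le_add (hB₁ t) (hB₂ t))
  have hbd : IsBoundedUnder (· ≤ ·) atTop φ := isBoundedUnder_of ⟨B₁ + B₂, fun t => hφB t⟩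
  have hcobd : IsBoundedUnder (· ≥ ·) atTop φ := isBoundedUnder_of ⟨0, fun t => hφ0 t⟩
  set ℓ : ℝ := limsup φ atTop with hℓdef
  have hℓ0 : (0:ℝ) ≤ ℓ :=
    le_limsup_of_frequently_le ((Eventually.of_forall hφ0).frequently) hbd
  have hstep : ∀ ε > (0:ℝ), ∀ δ > (0:ℝ), ℓ ≤ N * (L₂ * ε + L₃ * (ℓ + δ)) / ω + δ := by
    intro ε hε δ hδ
    have h1 : ∀ᶠ t in atTop, ‖x t - xb t‖ ≤ ε := hconv.eventually_le_const hε
    have h2 : ∀ᶠ t in atTop, φ t < ℓ + δ :=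
      eventually_lt_of_limsup_lt (lt_add_of_pos_right ℓ hδ) hbd
    obtain ⟨T, hT⟩ := (eventually_atTop).1 (h1.and h2)
    have hKb : ∀ s, T ≤ s → ‖y s - yb s‖ ≤ ℓ + δ := fun s hs => (hT s hs).2.le
    have hεb : ∀ s, T ≤ s → ‖x s - xb s‖ ≤ ε := fun s hs => (hT s hs).1
    have hexp0 : Tendsto (fun t => 2 * M₀ * N / ω * Real.exp (-ω * (t - T))) atTop (nhds 0) := by
      have hsub : Tendsto (fun t : ℝ => t - T) atTop atTop := by
        simpa [sub_eq_add_neg] using tendsto_atTop_add_const_right atTop (-T) tendsto_id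
      have h1' : Tendsto (fun t : ℝ => -ω * (t - T)) atTop atBot :=
        (tendsto_const_mul_atBot_of_neg (by linarith)).2 hsub
      have := (Real.tendsto_exp_atBot.comp h1').const_mul (2 * M₀ * N / ω)
      simpa using this
    have h3 : ∀ᶠ t in atTop, 2 * M₀ * N / ω * Real.exp (-ω * (t - T)) ≤ δ :=
      hexp0.eventually_le_const hδ
    have h4 : ∀ᶠ t in atTop, φ t ≤ N * (L₂ * ε + L₃ * (ℓ + δ)) / ω + δ := by
      filter_upwards [h3, eventually_ge_atTop T] with t h3t hTt
      have := key ε (ℓ + δ) T hε.le (add_nonneg hℓ0 hδ.le) hεb hKb t hTt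
      calc φ t ≤ 2 * M₀ * N / ω * Real.exp (-ω * (t - T))
            + N * (L₂ * ε + L₃ * (ℓ + δ)) / ω := this
      _ ≤ N * (L₂ * ε + L₃ * (ℓ + δ)) / ω + δ := by linarith
    exact limsup_le_of_le hcobd.isCoboundedUnder_le h4
  have hstep2 : ∀ ε > (0:ℝ), ℓ * (1 - N * L₃ / ω) ≤ N * L₂ * ε / ω := by
    intro ε hε
    have hCpos : (0:ℝ) < N * L₃ / ω + 1 := by positivity
    refine le_of_forall_pos_le_add fun η hη => ?_
    have hδ : (0:ℝ) < η / (N * L₃ / ω + 1) := by positivity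
    have h := hstep ε hε _ hδ
    have hδval : (η / (N * L₃ / ω + 1)) * (N * L₃ / ω + 1) = η :=
      div_mul_cancel₀ _ hCpos.ne'
    have hexpand : N * (L₂ * ε + L₃ * (ℓ + η / (N * L₃ / ω + 1))) / ω
        = N * L₂ * ε / ω + N * L₃ / ω * ℓ + N * L₃ / ω * (η / (N * L₃ / ω + 1)) := by
      field_simp; ring
    rw [hexpand] at h
    nlinarith [hδval]
  have hℓle : ℓ ≤ 0 := by
    have hfac : (0:ℝ) < 1 - N * L₃ / ω := by
      rw [sub_pos, div_lt_one hω]; linarith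
    have h5 : ℓ * (1 - N * L₃ / ω) ≤ 0 := by
      refine le_of_forall_pos_le_add fun η hη => ?_
      have hε : (0:ℝ) < η * ω / (N * L₂) := by positivity
      have h := hstep2 _ hε
      have : N * L₂ * (η * ω / (N * L₂)) / ω = η := by field_simp
      rw [this] at h
      linarith
    nlinarith
  have hlimsup : limsup φ atTop ≤ 0 := hℓle
  have hliminf : (0:ℝ) ≤ liminf φ atTop :=
    le_liminf_of_le hbd.isCoboundedUnder_ge (Eventually.of_forall hφ0)
  exact tendsto_of_le_liminf_of_limsup_le hliminf hlimsup hbd hcobd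
end

section
/- Under assumptions (A5) and (A7), if x : ℝ → ℝ^m and u : ℝ → ℝ^m are bounded continuous functions with ‖x(t) − u(t)‖ → 0 as t → −∞, and y, ỹ are the corresponding unique bounded solutions of y' = Ay + g(x(t), y) and ỹ' = Aỹ + g(u(t), ỹ), then ‖y(t) − ỹ(t)‖ → 0 as t → −∞. Moreover for all sufficiently negative t one has the explicit bound sup_{t ≤ R} ‖y(t) − ỹ(t)‖ ≤ (N L₂ β ε)/(ω − N L₃) whenever ‖x(t) − u(t)‖ < βε on (−∞, R]. -/
open MeasureTheory Set Filter

lemma aux_exp_integrableOn {c : ℝ} (hc : 0 < c) (t : ℝ) :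
    IntegrableOn (fun s => Real.exp (c * s)) (Iic t) := by
  have hderiv : ∀ s : ℝ, HasDerivAt (fun r => Real.exp (c * r) / c) (Real.exp (c * s)) s := by
    intro s
    have h1 : HasDerivAt (fun r : ℝ => Real.exp (c * r)) (Real.exp (c * s) * c) s := by
      have := (Real.hasDerivAt_exp (c * s)).comp s ((hasDerivAt_id s).const_mul c)
      simpa [mul_comm, Function.comp_def] using this
    have := h1.div_const c
    simpa [mul_div_assoc, mul_div_cancel_right₀ _ hc.ne'] using this
  have hcont : Continuous fun s : ℝ => Real.exp (c * s) := by fun_prop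
  apply integrableOn_Iic_of_intervalIntegral_norm_bounded (Real.exp (c * t) / c) t
    (a := fun i : ℝ => i) (l := atBot)
    (fun i => hcont.integrableOn_Ioc)
    tendsto_id
  filter_upwards [eventually_le_atBot t] with i hi
  have hFTC : (∫ s in i..t, Real.exp (c * s)) = Real.exp (c * t) / c - Real.exp (c * i) / c :=
    intervalIntegral.integral_eq_sub_of_hasDerivAt (fun s _ => hderiv s)
      (hcont.intervalIntegrable _ _)
  have : (∫ s in i..t, ‖Real.exp (c * s)‖) = ∫ s in i..t, Real.exp (c * s) := by
    simp [Real.norm_eq_abs, abs_of_pos (Real.exp_pos _)]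
  rw [this, hFTC]
  have := (Real.exp_pos (c * i)).le
  have hcpos := hc
  have : 0 ≤ Real.exp (c * i) / c := by positivity
  linarith

lemma aux_exp_integral {c : ℝ} (hc : 0 < c) (t : ℝ) :
    (∫ s in Iic t, Real.exp (c * s)) = Real.exp (c * t) / c := by
  have hderiv : ∀ s : ℝ, HasDerivAt (fun r => Real.exp (c * r) / c) (Real.exp (c * s)) s := by
    intro s
    have h1 : HasDerivAt (fun r : ℝ => Real.exp (c * r)) (Real.exp (c * s) * c) s := by
      have := (Real.hasDerivAt_exp (c * s)).comp s ((hasDerivAt_id s).const_mul c)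
      simpa [mul_comm, Function.comp_def] using this
    have := h1.div_const c
    simpa [mul_div_assoc, mul_div_cancel_right₀ _ hc.ne'] using this
  have htend : Tendsto (fun s => Real.exp (c * s) / c) atBot (nhds 0) := by
    have h1 : Tendsto (fun s : ℝ => c * s) atBot atBot := by
      exact Tendsto.const_mul_atBot hc tendsto_id
    have := (Real.tendsto_exp_atBot).comp h1
    simpa using this.div_const c
  have := MeasureTheory.integral_Iic_of_hasDerivAt_of_tendsto' (a := t)
    (fun s _ => hderiv s) (aux_exp_integrableOn hc t) htend
  simpa using this

lemma decay_integrableOn {ω : ℝ} (hω : 0 < ω) (t : ℝ) :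
    IntegrableOn (fun s => Real.exp (-ω * (t - s))) (Iic t) := by
  have heq : (fun s : ℝ => Real.exp (-ω * (t - s)))
      = fun s => Real.exp (-ω * t) * Real.exp (ω * s) := by
    funext s; rw [← Real.exp_add]; ring_nf
  rw [heq]
  exact (aux_exp_integrableOn hω t).const_mul _

lemma decay_integral {ω : ℝ} (hω : 0 < ω) (t : ℝ) :
    (∫ s in Iic t, Real.exp (-ω * (t - s))) = 1 / ω := by
  have heq : (fun s : ℝ => Real.exp (-ω * (t - s)))
      = fun s => Real.exp (-ω * t) * Real.exp (ω * s) := by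
    funext s; rw [← Real.exp_add]; ring_nf
  rw [heq, MeasureTheory.integral_const_mul, aux_exp_integral hω t]
  have h0 : -ω * t + ω * t = 0 := by ring
  rw [← mul_div_assoc, ← Real.exp_add, h0, Real.exp_zero]

section
attribute [local instance] Matrix.linftyOpNormedAddCommGroup Matrix.linftyOpNormedRing
  Matrix.linftyOpNormedAlgebra

lemma eAt_cont {n : ℕ} (A : Matrix (Fin n) (Fin n) ℝ) : Continuous fun t : ℝ => eAt A t := by
  have hφ : Continuous fun M : Matrix (Fin n) (Fin n) ℝ => Matrix.toEuclideanCLM (𝕜 := ℝ) M := by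
    let φ : Matrix (Fin n) (Fin n) ℝ →ₗ[ℝ] (Eu n →L[ℝ] Eu n) :=
      { toFun := fun M => Matrix.toEuclideanCLM (𝕜 := ℝ) M
        map_add' := fun a b => map_add _ a b
        map_smul' := fun c a => map_smul _ c a }
    exact φ.continuous_of_finiteDimensional
  exact hφ.comp (NormedSpace.exp_continuous.comp (continuous_id.smul continuous_const))

end

/-- Convergence as t → −∞ of the driving functions implies convergence of the
corresponding bounded solutions, with an explicit bound. -/
theorem stmt4 {m n : ℕ} (A : Matrix (Fin n) (Fin n) ℝ) (N ω M₀ L₂ L₃ : ℝ)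
    (hN : 0 < N) (hω : 0 < ω) (hL₂ : 0 < L₂) (hL₃ : 0 < L₃)
    (hA : ∀ t : ℝ, 0 ≤ t → ‖eAt A t‖ ≤ N * Real.exp (-ω * t))
    (g : Eu m → Eu n → Eu n)
    (hgc : Continuous fun p : Eu m × Eu n => g p.1 p.2)
    (hgb : ∀ x y, ‖g x y‖ ≤ M₀)
    (hg₂ : ∀ x₁ x₂ y, ‖g x₁ y - g x₂ y‖ ≤ L₂ * ‖x₁ - x₂‖)
    (hg₃ : ∀ x y₁ y₂, ‖g x y₁ - g x y₂‖ ≤ L₃ * ‖y₁ - y₂‖)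
    (hcond : N * L₃ - ω < 0)
    (x u : ℝ → Eu m) (hxc : Continuous x) (huc : Continuous u)
    (hxB : ∃ H, ∀ t, ‖x t‖ ≤ H) (huB : ∃ H, ∀ t, ‖u t‖ ≤ H)
    (hconv : Tendsto (fun t => ‖x t - u t‖) atBot (nhds 0))
    (y yt : ℝ → Eu n)
    (hyB : ∃ B, ∀ t, ‖y t‖ ≤ B) (hytB : ∃ B, ∀ t, ‖yt t‖ ≤ B)
    (hy : ∀ t, HasDerivAt y (mulA A (y t) + g (x t) (y t)) t)
    (hyint : ∀ t, y t = ∫ s in Iic t, eAt A (t - s) (g (x s) (y s)))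
    (hyt : ∀ t, HasDerivAt yt (mulA A (yt t) + g (u t) (yt t)) t)
    (hytint : ∀ t, yt t = ∫ s in Iic t, eAt A (t - s) (g (u s) (yt s))) :
    Tendsto (fun t => ‖y t - yt t‖) atBot (nhds 0) ∧
    ∀ β ε R : ℝ, 0 < β → 0 < ε →
      (∀ t ≤ R, ‖x t - u t‖ < β * ε) →
      ∀ t ≤ R, ‖y t - yt t‖ ≤ N * L₂ * β * ε / (ω - N * L₃) := by
  obtain ⟨By, hBy⟩ := hyB
  obtain ⟨Byt, hByt⟩ := hytB
  have hyc : Continuous y := continuous_iff_continuousAt.2 fun t => (hy t).continuousAt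
  have hytc : Continuous yt := continuous_iff_continuousAt.2 fun t => (hyt t).continuousAt
  have hω' : 0 < ω - N * L₃ := by linarith
  have hM₀ : 0 ≤ M₀ := le_trans (norm_nonneg _) (hgb 0 0)
  -- generic integrability of the integrand
  have hint : ∀ (v : ℝ → Eu m) (w : ℝ → Eu n), Continuous v → Continuous w → ∀ t : ℝ,
      IntegrableOn (fun s => eAt A (t - s) (g (v s) (w s))) (Iic t) := by
    intro v w hvc hwc t
    have hcont : Continuous fun s => eAt A (t - s) (g (v s) (w s)) := by
      have h1 : Continuous fun s : ℝ => eAt A (t - s) :=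
        (eAt_cont A).comp ((continuous_const : Continuous fun _ : ℝ => t).sub continuous_id)
      exact h1.clm_apply (hgc.comp (hvc.prodMk hwc))
    apply Integrable.mono' ((decay_integrableOn hω t).const_mul (N * M₀))
      hcont.aestronglyMeasurable
    rw [ae_restrict_iff' measurableSet_Iic]
    filter_upwards with s hs
    calc ‖eAt A (t - s) (g (v s) (w s))‖
        ≤ ‖eAt A (t - s)‖ * ‖g (v s) (w s)‖ := (eAt A (t - s)).le_opNorm _
      _ ≤ N * Real.exp (-ω * (t - s)) * M₀ :=
          mul_le_mul (hA _ (sub_nonneg.2 (mem_Iic.mp hs))) (hgb _ _) (norm_nonneg _)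
            (by positivity)
      _ = N * M₀ * Real.exp (-ω * (t - s)) := by ring
  -- the key quantitative bound
  have key : ∀ R C : ℝ, 0 ≤ C → (∀ t ≤ R, ‖x t - u t‖ ≤ C) →
      ∀ t ≤ R, ‖y t - yt t‖ ≤ N * L₂ * C / (ω - N * L₃) := by
    intro R C hC hxu
    set S : Set ℝ := (fun t => ‖y t - yt t‖) '' Iic R with hS
    have hSne : S.Nonempty := ⟨_, ⟨R, self_mem_Iic, rfl⟩⟩
    have hSbdd : BddAbove S := by
      refine ⟨By + Byt, ?_⟩
      rintro v ⟨s, _, rfl⟩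
      exact (norm_sub_le _ _).trans (add_le_add (hBy s) (hByt s))
    set D := sSup S with hD
    have hDle : ∀ s, s ≤ R → ‖y s - yt s‖ ≤ D := fun s hs => le_csSup hSbdd ⟨s, hs, rfl⟩
    have hD0 : 0 ≤ D := le_trans (norm_nonneg _) (hDle R le_rfl)
    have main : ∀ t, t ≤ R → ‖y t - yt t‖ ≤ N * (L₂ * C + L₃ * D) / ω := by
      intro t ht
      have hint1 := hint x y hxc hyc t
      have hint2 := hint u yt huc hytc t
      have hsub : y t - yt t
          = ∫ s in Iic t, (eAt A (t - s) (g (x s) (y s)) - eAt A (t - s) (g (u s) (yt s))) := by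
        rw [hyint t, hytint t, integral_sub hint1 hint2]
      have hK : 0 ≤ L₂ * C + L₃ * D := by positivity
      calc ‖y t - yt t‖
          = ‖∫ s in Iic t, (eAt A (t - s) (g (x s) (y s)) - eAt A (t - s) (g (u s) (yt s)))‖ := by
            rw [hsub]
        _ ≤ ∫ s in Iic t, ‖eAt A (t - s) (g (x s) (y s)) - eAt A (t - s) (g (u s) (yt s))‖ :=
            norm_integral_le_integral_norm _
        _ ≤ ∫ s in Iic t, N * Real.exp (-ω * (t - s)) * (L₂ * C + L₃ * D) := by
            apply setIntegral_mono_on (hint1.sub hint2).norm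
              (((decay_integrableOn hω t).const_mul N).mul_const _) measurableSet_Iic
            intro s hs
            have hs' : s ≤ t := mem_Iic.mp hs
            have hgs : ‖g (x s) (y s) - g (u s) (yt s)‖ ≤ L₂ * C + L₃ * D := by
              have heq : g (x s) (y s) - g (u s) (yt s)
                  = (g (x s) (y s) - g (u s) (y s)) + (g (u s) (y s) - g (u s) (yt s)) := by abel
              rw [heq]
              refine (norm_add_le _ _).trans (add_le_add ?_ ?_)
              · exact (hg₂ _ _ _).trans (mul_le_mul_of_nonneg_left
                  (hxu s (hs'.trans ht)) hL₂.le)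
              · exact (hg₃ _ _ _).trans (mul_le_mul_of_nonneg_left
                  (hDle s (hs'.trans ht)) hL₃.le)
            calc ‖eAt A (t - s) (g (x s) (y s)) - eAt A (t - s) (g (u s) (yt s))‖
                = ‖eAt A (t - s) (g (x s) (y s) - g (u s) (yt s))‖ := by rw [map_sub]
              _ ≤ ‖eAt A (t - s)‖ * ‖g (x s) (y s) - g (u s) (yt s)‖ :=
                  (eAt A (t - s)).le_opNorm _
              _ ≤ N * Real.exp (-ω * (t - s)) * (L₂ * C + L₃ * D) :=
                  mul_le_mul (hA _ (sub_nonneg.2 hs')) hgs (norm_nonneg _) (by positivity)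
        _ = N * (L₂ * C + L₃ * D) / ω := by
            have heq : (fun s : ℝ => N * Real.exp (-ω * (t - s)) * (L₂ * C + L₃ * D))
                = fun s => (N * (L₂ * C + L₃ * D)) * Real.exp (-ω * (t - s)) := by
              funext s; ring
            rw [heq, MeasureTheory.integral_const_mul, decay_integral hω t]
            ring
    have hDle2 : D ≤ N * (L₂ * C + L₃ * D) / ω :=
      csSup_le hSne (by rintro v ⟨s, hs, rfl⟩; exact main s hs)
    have hDfin : D ≤ N * L₂ * C / (ω - N * L₃) := by
      rw [le_div_iff₀ hω] at hDle2
      rw [le_div_iff₀ hω']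
      nlinarith
    intro t ht
    exact (hDle t ht).trans hDfin
  constructor
  · rw [Metric.tendsto_nhds]
    intro ε hε
    set δ := ε * (ω - N * L₃) / (2 * N * L₂) with hδdef
    have hδ : 0 < δ := by positivity
    have h1 : ∀ᶠ t in atBot, ‖x t - u t‖ < δ := by
      have := (Metric.tendsto_nhds.1 hconv) δ hδ
      simpa [Real.dist_eq, abs_of_nonneg (norm_nonneg _)] using this
    obtain ⟨R, hR⟩ := eventually_atBot.1 h1
    have hbound := key R δ hδ.le (fun t ht => (hR t ht).le)
    rw [eventually_atBot]
    refine ⟨R, fun t ht => ?_⟩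
    rw [Real.dist_eq, sub_zero, abs_of_nonneg (norm_nonneg _)]
    calc ‖y t - yt t‖ ≤ N * L₂ * δ / (ω - N * L₃) := hbound t ht
      _ = ε / 2 := by
          rw [hδdef]; field_simp
      _ < ε := by linarith
  · intro β ε R hβ hε hxu t ht
    have := key R (β * ε) (by positivity) (fun s hs => (hxu s hs).le) t ht
    calc ‖y t - yt t‖ ≤ N * L₂ * (β * ε) / (ω - N * L₃) := this
      _ = N * L₂ * β * ε / (ω - N * L₃) := by ring
end

section
/- Suppose F : ℝ × ℝ^m → ℝ^m is continuous and L₀-Lipschitz in x, and the set 𝒜_x of uniformly bounded (by H) solutions of x' = F(t,x) satisfies: there exists ε̄ > 0 such that for every x ∈ 𝒜_x and δ > 0 there exist x̄ ∈ 𝒜_x, t₀ ∈ ℝ and ζ ≥ t₀ with ‖x(t₀) − x̄(t₀)‖ < δ and ‖x(ζ) − x̄(ζ)‖ > ε̄. If additionally sup ‖F‖ ≤ H₀, then with Δ = ε̄/(8 H L₀) and ε = ε̄/2, for every x ∈ 𝒜_x and δ > 0 there exist x̄ ∈ 𝒜_x, t₀ ∈ ℝ and an interval J ⊂ [t₀,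 ∞) of length at least Δ such that ‖x(t₀) − x̄(t₀)‖ < δ and ‖x(t) − x̄(t)‖ ≥ ε for all t ∈ J. -/
open MeasureTheory Set Filter

/-- Pointwise sensitivity of the set 𝒜ₓ extends to sensitivity on intervals of
length Δ = ε̄/(8 H L₀), with separation constant ε = ε̄/2. -/
theorem stmt8 {m : ℕ} (F : ℝ → Eu m → Eu m) (L₀ H H₀ εb : ℝ)
    (hL₀ : 0 < L₀) (hH : 0 < H) (hεb : 0 < εb)
    (hFc : Continuous fun p : ℝ × Eu m => F p.1 p.2)
    (hFlip : ∀ t x₁ x₂, ‖F t x₁ - F t x₂‖ ≤ L₀ * ‖x₁ - x₂‖)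
    (hFb : ∀ t x, ‖F t x‖ ≤ H₀)
    (Ax : Set (ℝ → Eu m))
    (hsol : ∀ x ∈ Ax, ∀ t, HasDerivAt x (F t (x t)) t)
    (hbdd : ∀ x ∈ Ax, ∀ t, ‖x t‖ ≤ H)
    (hsens : ∀ x ∈ Ax, ∀ δ > (0:ℝ), ∃ xb ∈ Ax, ∃ t₀ ζ : ℝ, t₀ ≤ ζ ∧
      ‖x t₀ - xb t₀‖ < δ ∧ εb < ‖x ζ - xb ζ‖) :
    ∀ x ∈ Ax, ∀ δ > (0:ℝ), ∃ xb ∈ Ax, ∃ t₀ c d : ℝ,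
      t₀ ≤ c ∧ εb / (8 * H * L₀) ≤ d - c ∧ ‖x t₀ - xb t₀‖ < δ ∧
      ∀ t ∈ Icc c d, εb / 2 ≤ ‖x t - xb t‖ := by
  intro x hx δ hδ
  obtain ⟨xb, hxb, t₀, ζ, hζ, hδ', hsep⟩ := hsens x hx δ hδ
  set Δ : ℝ := εb / (8 * H * L₀) with hΔ
  have hΔpos : 0 < Δ := by positivity
  refine ⟨xb, hxb, t₀, ζ, ζ + Δ, hζ, by linarith, hδ', ?_⟩
  intro t ht
  -- mean value estimate on g = x - xb
  have hC : ∀ s ∈ Icc ζ t, HasDerivWithinAt (fun u => x u - xb u)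
      (F s (x s) - F s (xb s)) (Icc ζ t) s := fun s _ =>
    (((hsol x hx s).sub (hsol xb hxb s)).hasDerivWithinAt)
  have hbound : ∀ s ∈ Icc ζ t, ‖F s (x s) - F s (xb s)‖ ≤ 2 * H * L₀ := by
    intro s _
    calc ‖F s (x s) - F s (xb s)‖ ≤ L₀ * ‖x s - xb s‖ := hFlip s _ _
      _ ≤ L₀ * (2 * H) := by
          have := norm_sub_le (x s) (xb s)
          have h1 := hbdd x hx s
          have h2 := hbdd xb hxb s
          nlinarith
      _ = 2 * H * L₀ := by ring
  have hmv := (convex_Icc ζ t).norm_image_sub_le_of_norm_hasDerivWithin_le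
      hC hbound (left_mem_Icc.2 ht.1) ⟨ht.1, le_refl t⟩
  -- hmv : ‖(x t - xb t) - (x ζ - xb ζ)‖ ≤ 2*H*L₀ * ‖t - ζ‖
  have htζ : ‖t - ζ‖ ≤ Δ := by
    rw [Real.norm_eq_abs, abs_of_nonneg (by linarith [ht.1])]
    linarith [ht.2]
  have key : ‖(x t - xb t) - (x ζ - xb ζ)‖ ≤ 2 * H * L₀ * Δ := by
    refine hmv.trans ?_
    have : (0:ℝ) ≤ 2 * H * L₀ := by positivity
    exact mul_le_mul_of_nonneg_left htζ this
  have hΔval : 2 * H * L₀ * Δ = εb / 4 := by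
    rw [hΔ]; field_simp <;> ring
  have := norm_sub_norm_le (x t - xb t) (x ζ - xb ζ)
  rw [hΔval] at key
  have habs : |‖x t - xb t‖ - ‖x ζ - xb ζ‖| ≤ εb / 4 :=
    (abs_norm_sub_norm_le _ _).trans key
  have := abs_le.1 habs
  linarith [this.1]
end

section
/- Let y, ȳ : [θ, θ+τ] → ℝ^n be continuously differentiable, bounded by M, satisfying y' = Ay + g(x(t), y) and ȳ' = Aȳ + g(x̄(t), ȳ), and suppose ‖∫_θ^{θ+τ} [g(x(s), y(s)) − g(x̄(s), y(s))] ds‖ > τ L₁ ε₀ / (2n), where g is L₃-Lipschitz in its second variable. Then max_{t ∈ [θ, θ+τ]} ‖y(t) − ȳ(t)‖ > τ L₁ ε₀ / (2n [2 + τ(L₃ + ‖A‖)]). -/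
open MeasureTheory Set Filter

/-- If the integral of g(x,y) − g(x̄,y) over [θ, θ+τ] is large, then
‖y − ȳ‖ is large somewhere on [θ, θ+τ]. -/
theorem stmt13 {m n : ℕ} (hn : 0 < n) (A : Matrix (Fin n) (Fin n) ℝ)
    (L₁ L₃ ε₀ τ θ M : ℝ)
    (hL₁ : 0 < L₁) (hL₃ : 0 < L₃) (hε₀ : 0 < ε₀) (hτ : 0 < τ)
    (g : Eu m → Eu n → Eu n)
    (hgc : Continuous fun p : Eu m × Eu n => g p.1 p.2)
    (hg₃ : ∀ x y₁ y₂, ‖g x y₁ - g x y₂‖ ≤ L₃ * ‖y₁ - y₂‖)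
    (x xb : ℝ → Eu m) (hxc : Continuous x) (hxbc : Continuous xb)
    (y yb : ℝ → Eu n)
    (hy : ∀ t ∈ Icc θ (θ + τ), HasDerivAt y (mulA A (y t) + g (x t) (y t)) t)
    (hyd : ∀ t ∈ Icc θ (θ + τ), HasDerivAt yb (mulA A (yb t) + g (xb t) (yb t)) t)
    (hyM : ∀ t ∈ Icc θ (θ + τ), ‖y t‖ ≤ M ∧ ‖yb t‖ ≤ M)
    (hint : τ * L₁ * ε₀ / (2 * (n : ℝ)) <
      ‖∫ s in θ..(θ + τ), (g (x s) (y s) - g (xb s) (y s))‖) :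
    ∃ t ∈ Icc θ (θ + τ),
      τ * L₁ * ε₀ / (2 * (n : ℝ) * (2 + τ * (L₃ + ‖mulA A‖))) < ‖y t - yb t‖ := by
  by_contra hcon
  push_neg at hcon
  set D : ℝ := τ * L₁ * ε₀ / (2 * (n : ℝ) * (2 + τ * (L₃ + ‖mulA A‖))) with hDdef
  have hθτ : θ ≤ θ + τ := by linarith
  have huIcc : Set.uIcc θ (θ + τ) = Icc θ (θ + τ) := uIcc_of_le hθτ
  have hyc : ContinuousOn y (Icc θ (θ + τ)) := fun t ht =>
    (hy t ht).continuousAt.continuousWithinAt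
  have hybc : ContinuousOn yb (Icc θ (θ + τ)) := fun t ht =>
    (hyd t ht).continuousAt.continuousWithinAt
  have hc1 : ContinuousOn (fun s => g (x s) (y s)) (Icc θ (θ + τ)) :=
    hgc.comp_continuousOn (hxc.continuousOn.prodMk hyc)
  have hc2 : ContinuousOn (fun s => g (xb s) (y s)) (Icc θ (θ + τ)) :=
    hgc.comp_continuousOn (hxbc.continuousOn.prodMk hyc)
  have hc3 : ContinuousOn (fun s => g (xb s) (yb s)) (Icc θ (θ + τ)) :=
    hgc.comp_continuousOn (hxbc.continuousOn.prodMk hybc)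
  have hcA : ContinuousOn (fun s => mulA A (y s - yb s)) (Icc θ (θ + τ)) :=
    (mulA A).continuous.comp_continuousOn (hyc.sub hybc)
  have hiA : IntervalIntegrable (fun s => mulA A (y s - yb s)) volume θ (θ + τ) :=
    (hcA.mono huIcc.subset).intervalIntegrable
  have hi23 : IntervalIntegrable (fun s => g (xb s) (y s) - g (xb s) (yb s))
      volume θ (θ + τ) := ((hc2.sub hc3).mono huIcc.subset).intervalIntegrable
  have hi12 : IntervalIntegrable (fun s => g (x s) (y s) - g (xb s) (y s))
      volume θ (θ + τ) := ((hc1.sub hc2).mono huIcc.subset).intervalIntegrable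
  -- FTC for h = y - yb
  have hderiv : ∀ t ∈ Set.uIcc θ (θ + τ), HasDerivAt (fun s => y s - yb s)
      (mulA A (y t - yb t) + (g (xb t) (y t) - g (xb t) (yb t))
        + (g (x t) (y t) - g (xb t) (y t))) t := by
    intro t ht
    rw [huIcc] at ht
    have h := (hy t ht).sub (hyd t ht)
    refine h.congr_deriv ?_
    simp only [map_sub]
    abel
  have hiD : IntervalIntegrable (fun t => mulA A (y t - yb t)
      + (g (xb t) (y t) - g (xb t) (yb t)) + (g (x t) (y t) - g (xb t) (y t)))
      volume θ (θ + τ) := (hiA.add hi23).add hi12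
  have hftc := intervalIntegral.integral_eq_sub_of_hasDerivAt hderiv hiD
  rw [intervalIntegral.integral_add (hiA.add hi23) hi12,
    intervalIntegral.integral_add hiA hi23] at hftc
  -- bounds
  have hIoc : Set.uIoc θ (θ + τ) ⊆ Icc θ (θ + τ) := by
    rw [uIoc_of_le hθτ]; exact Ioc_subset_Icc_self
  have hbA : ‖∫ s in θ..(θ + τ), mulA A (y s - yb s)‖ ≤ ‖mulA A‖ * D * τ := by
    have := intervalIntegral.norm_integral_le_of_norm_le_const
      (C := ‖mulA A‖ * D) (f := fun s => mulA A (y s - yb s)) (a := θ) (b := θ + τ)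
      (fun s hs => le_trans ((mulA A).le_opNorm _)
        (mul_le_mul_of_nonneg_left (hcon s (hIoc hs)) (norm_nonneg _)))
    calc ‖∫ s in θ..(θ + τ), mulA A (y s - yb s)‖ ≤ ‖mulA A‖ * D * |θ + τ - θ| := this
      _ = ‖mulA A‖ * D * τ := by rw [add_sub_cancel_left, abs_of_pos hτ]
  have hb23 : ‖∫ s in θ..(θ + τ), (g (xb s) (y s) - g (xb s) (yb s))‖ ≤ L₃ * D * τ := by
    have := intervalIntegral.norm_integral_le_of_norm_le_const
      (C := L₃ * D) (f := fun s => g (xb s) (y s) - g (xb s) (yb s)) (a := θ) (b := θ + τ)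
      (fun s hs => le_trans (hg₃ _ _ _)
        (mul_le_mul_of_nonneg_left (hcon s (hIoc hs)) hL₃.le))
    calc ‖∫ s in θ..(θ + τ), (g (xb s) (y s) - g (xb s) (yb s))‖ ≤ L₃ * D * |θ + τ - θ| := this
      _ = L₃ * D * τ := by rw [add_sub_cancel_left, abs_of_pos hτ]
  have hb0 : ‖y θ - yb θ‖ ≤ D := hcon θ (by constructor <;> linarith)
  have hb1 : ‖y (θ + τ) - yb (θ + τ)‖ ≤ D := hcon (θ + τ) (by constructor <;> linarith)
  -- express the key integral
  have hkey : (∫ s in θ..(θ + τ), (g (x s) (y s) - g (xb s) (y s)))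
      = (y (θ + τ) - yb (θ + τ)) - (y θ - yb θ)
        - (∫ s in θ..(θ + τ), mulA A (y s - yb s))
        - (∫ s in θ..(θ + τ), (g (xb s) (y s) - g (xb s) (yb s))) := by
    rw [← hftc]; abel
  have hbound : ‖∫ s in θ..(θ + τ), (g (x s) (y s) - g (xb s) (y s))‖
      ≤ D * (2 + τ * (L₃ + ‖mulA A‖)) := by
    rw [hkey]
    calc ‖(y (θ + τ) - yb (θ + τ)) - (y θ - yb θ)
          - (∫ s in θ..(θ + τ), mulA A (y s - yb s))
          - (∫ s in θ..(θ + τ), (g (xb s) (y s) - g (xb s) (yb s)))‖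
        ≤ ‖(y (θ + τ) - yb (θ + τ)) - (y θ - yb θ)
          - (∫ s in θ..(θ + τ), mulA A (y s - yb s))‖
          + ‖∫ s in θ..(θ + τ), (g (xb s) (y s) - g (xb s) (yb s))‖ := norm_sub_le _ _
      _ ≤ (‖(y (θ + τ) - yb (θ + τ)) - (y θ - yb θ)‖
          + ‖∫ s in θ..(θ + τ), mulA A (y s - yb s)‖)
          + ‖∫ s in θ..(θ + τ), (g (xb s) (y s) - g (xb s) (yb s))‖ := by
            gcongr; exact norm_sub_le _ _
      _ ≤ ((‖y (θ + τ) - yb (θ + τ)‖ + ‖y θ - yb θ‖)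
          + ‖∫ s in θ..(θ + τ), mulA A (y s - yb s)‖)
          + ‖∫ s in θ..(θ + τ), (g (xb s) (y s) - g (xb s) (yb s))‖ := by
            gcongr; exact norm_sub_le _ _
      _ ≤ ((D + D) + ‖mulA A‖ * D * τ) + L₃ * D * τ := by gcongr
      _ = D * (2 + τ * (L₃ + ‖mulA A‖)) := by ring
  have hden : (0:ℝ) < 2 + τ * (L₃ + ‖mulA A‖) := by
    have := norm_nonneg (mulA A); nlinarith
  have alg : ∀ a b : ℝ, 0 < b → a / (2 * (n : ℝ) * b) * b = a / (2 * (n : ℝ)) := by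
    intro a b hb
    have hn' : (0:ℝ) < (n:ℝ) := Nat.cast_pos.mpr hn
    field_simp
  have hDeq : D * (2 + τ * (L₃ + ‖mulA A‖)) = τ * L₁ * ε₀ / (2 * (n : ℝ)) :=
    alg _ _ hden
  rw [hDeq] at hbound
  linarith
end

section
/- In the setting of the previous estimate, suppose additionally that ‖y(t)‖, ‖ȳ(t)‖ ≤ M and that ‖y'(t)‖, ‖ȳ'(t)‖ ≤ M‖A‖ + M₀ on [θ, θ+τ], where M₀ bounds g. If max_{t∈[θ,θ+τ]} ‖y(t) − ȳ(t)‖ > τ L₁ ε₀ / (2n[2 + τ(L₃ + ‖A‖)]), then there exists a subinterval J¹ ⊂ [θ, θ+τ] of length τ¹ = min{ τ/2, τ L₁ ε₀ / (8n (M‖A‖ + M₀)[2 + τ(L₃ + ‖A‖)]) } on which ‖y(t) − ȳ(t)‖ > τ L₁ ε₀ / (4n[2 + τ(L₃ + ‖A‖)]) for all t ∈ J¹. -/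
open MeasureTheory Set Filter

/-- A pointwise lower bound on ‖y − ȳ‖ propagates to a subinterval of length
τ¹ with lower bound halved, using the derivative bound M‖A‖ + M₀. -/
theorem stmt14 {m n : ℕ} (hn : 0 < n) (A : Matrix (Fin n) (Fin n) ℝ)
    (L₁ L₃ ε₀ τ θ M M₀ : ℝ)
    (hL₁ : 0 < L₁) (hL₃ : 0 < L₃) (hε₀ : 0 < ε₀) (hτ : 0 < τ)
    (hM : 0 < M) (hM₀ : 0 < M₀)
    (g : Eu m → Eu n → Eu n)
    (hgc : Continuous fun p : Eu m × Eu n => g p.1 p.2)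
    (hgb : ∀ x y, ‖g x y‖ ≤ M₀)
    (hg₃ : ∀ x y₁ y₂, ‖g x y₁ - g x y₂‖ ≤ L₃ * ‖y₁ - y₂‖)
    (x xb : ℝ → Eu m) (hxc : Continuous x) (hxbc : Continuous xb)
    (y yb : ℝ → Eu n)
    (hy : ∀ t ∈ Icc θ (θ + τ), HasDerivAt y (mulA A (y t) + g (x t) (y t)) t)
    (hyd : ∀ t ∈ Icc θ (θ + τ), HasDerivAt yb (mulA A (yb t) + g (xb t) (yb t)) t)
    (hyM : ∀ t ∈ Icc θ (θ + τ), ‖y t‖ ≤ M ∧ ‖yb t‖ ≤ M)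
    (hmax : ∃ η ∈ Icc θ (θ + τ),
      τ * L₁ * ε₀ / (2 * (n : ℝ) * (2 + τ * (L₃ + ‖mulA A‖))) < ‖y η - yb η‖) :
    ∃ θ₁ : ℝ,
      Icc θ₁ (θ₁ + min (τ / 2)
        (τ * L₁ * ε₀ / (8 * (n : ℝ) * (M * ‖mulA A‖ + M₀) * (2 + τ * (L₃ + ‖mulA A‖)))))
        ⊆ Icc θ (θ + τ) ∧
      ∀ t ∈ Icc θ₁ (θ₁ + min (τ / 2)
        (τ * L₁ * ε₀ / (8 * (n : ℝ) * (M * ‖mulA A‖ + M₀) * (2 + τ * (L₃ + ‖mulA A‖))))),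
        τ * L₁ * ε₀ / (4 * (n : ℝ) * (2 + τ * (L₃ + ‖mulA A‖))) < ‖y t - yb t‖ := by
  obtain ⟨η, hη, hηb⟩ := hmax
  set nA := ‖mulA A‖ with hnA
  have hnA0 : 0 ≤ nA := norm_nonneg _
  set K := M * nA + M₀ with hK
  have hK0 : 0 < K := by positivity
  set E := 2 + τ * (L₃ + nA) with hE
  have hE0 : 0 < E := by positivity
  set c := τ * L₁ * ε₀ / (2 * (n : ℝ) * E) with hc
  have hn' : (0:ℝ) < n := by exact_mod_cast hn
  have hc0 : 0 < c := by positivity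
  set τ₁ := min (τ / 2) (τ * L₁ * ε₀ / (8 * (n : ℝ) * K * E)) with hτ₁
  have hτ₁0 : 0 < τ₁ := by
    apply lt_min (by linarith)
    positivity
  have hτ₁half : τ₁ ≤ τ / 2 := min_le_left _ _
  have hτ₁le : τ₁ ≤ τ * L₁ * ε₀ / (8 * (n : ℝ) * K * E) := min_le_right _ _
  clear_value nA K E c τ₁
  -- Lipschitz bound on w := y - yb
  have hw : ∀ s ∈ Icc θ (θ + τ), ∀ t ∈ Icc θ (θ + τ),
      ‖(y t - yb t) - (y s - yb s)‖ ≤ (2 * K) * ‖t - s‖ := by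
    intro s hs t ht
    have := Convex.norm_image_sub_le_of_norm_hasDerivWithin_le
      (f := fun u => y u - yb u)
      (f' := fun u => (mulA A (y u) + g (x u) (y u)) - (mulA A (yb u) + g (xb u) (yb u)))
      (s := Icc θ (θ + τ)) (C := 2 * K)
      (fun u hu => (((hy u hu).sub (hyd u hu)).hasDerivWithinAt))
      (fun u hu => by
        obtain ⟨h1, h2⟩ := hyM u hu
        have b1 : ‖mulA A (y u)‖ ≤ nA * M :=
          le_trans ((mulA A).le_opNorm _) (by nlinarith)
        have b2 : ‖mulA A (yb u)‖ ≤ nA * M :=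
          le_trans ((mulA A).le_opNorm _) (by nlinarith)
        have := hgb (x u) (y u)
        have := hgb (xb u) (yb u)
        calc ‖(mulA A (y u) + g (x u) (y u)) - (mulA A (yb u) + g (xb u) (yb u))‖
            ≤ ‖mulA A (y u) + g (x u) (y u)‖ + ‖mulA A (yb u) + g (xb u) (yb u)‖ :=
              norm_sub_le _ _
          _ ≤ (‖mulA A (y u)‖ + ‖g (x u) (y u)‖) + (‖mulA A (yb u)‖ + ‖g (xb u) (yb u)‖) := by
              gcongr <;> exact norm_add_le _ _
          _ ≤ 2 * K := by simp only [hK]; nlinarith)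
      (convex_Icc _ _) hs ht
    simpa using this
  -- the key estimate on points within τ₁ of η
  have key : ∀ t ∈ Icc θ (θ + τ), ‖t - η‖ ≤ τ₁ → c / 2 < ‖y t - yb t‖ := by
    intro t ht hdist
    have hlip := hw η hη t ht
    have h2Kτ : (2 * K) * τ₁ ≤ c / 2 := by
      have hK' : K ≠ 0 := ne_of_gt hK0
      have hE' : E ≠ 0 := ne_of_gt hE0
      have hn'' : (n : ℝ) ≠ 0 := ne_of_gt hn'
      calc (2 * K) * τ₁ ≤ (2 * K) * (τ * L₁ * ε₀ / (8 * (n : ℝ) * K * E)) := by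
            gcongr
        _ = c / 2 := by rw [hc]; field_simp; ring
    have : ‖y η - yb η‖ - ‖y t - yb t‖ ≤ (2 * K) * τ₁ := by
      have := norm_sub_norm_le (y η - yb η) (y t - yb t)
      have h2 : ‖(y η - yb η) - (y t - yb t)‖ ≤ (2 * K) * τ₁ := by
        have := hw t ht η hη
        calc ‖(y η - yb η) - (y t - yb t)‖ ≤ (2*K) * ‖η - t‖ := this
          _ ≤ (2*K) * τ₁ := by
              gcongr
              rwa [show η - t = -(t - η) by ring, norm_neg]
      linarith
    linarith
  by_cases hcase : η ≤ θ + τ / 2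
  · refine ⟨η, ?_, ?_⟩
    · intro t ht
      obtain ⟨h1, h2⟩ := ht
      constructor
      · linarith [hη.1]
      · linarith
    · intro t ht
      have htin : t ∈ Icc θ (θ + τ) := by
        constructor
        · linarith [hη.1, ht.1]
        · linarith [ht.2]
      have : ‖t - η‖ ≤ τ₁ := by
        rw [Real.norm_eq_abs, abs_le]
        constructor <;> [linarith [ht.1]; linarith [ht.2]]
      have := key t htin this
      calc τ * L₁ * ε₀ / (4 * (n : ℝ) * E) = c / 2 := by rw [hc]; field_simp; ring
        _ < ‖y t - yb t‖ := this
  · push_neg at hcase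
    refine ⟨η - τ₁, ?_, ?_⟩
    · intro t ht
      obtain ⟨h1, h2⟩ := ht
      constructor
      · linarith
      · have := hη.2
        linarith
    · intro t ht
      have htin : t ∈ Icc θ (θ + τ) := by
        constructor
        · linarith [ht.1]
        · linarith [ht.2, hη.2]
      have : ‖t - η‖ ≤ τ₁ := by
        rw [Real.norm_eq_abs, abs_le]
        constructor <;> [linarith [ht.1]; linarith [ht.2]]
      have := key t htin this
      calc τ * L₁ * ε₀ / (4 * (n : ℝ) * E) = c / 2 := by rw [hc]; field_simp; ring
        _ < ‖y t - yb t‖ := this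
end

section
/- Convolution Gronwall lemma: let v : [R₁, ∞) → [0, ∞) be continuous and bounded and suppose v(t) ≤ c e^{-ω(t−R₁)} + ∫_{R₁}^{t} e^{-ω(t−s)} (k v(s) + d) ds for all t ≥ R₁, where c, d ≥ 0 and 0 < k < ω. Then v(t) ≤ c e^{(k−ω)(t−R₁)} + (d/(ω − k)) (1 − e^{(k−ω)(t−R₁)}) for all t ≥ R₁; in particular limsup_{t→∞} v(t) ≤ d/(ω − k). -/
open MeasureTheory Set Filter

/-- Convolution Gronwall lemma with exponential kernel. -/
theorem stmt18 (R₁ ω k c d : ℝ) (hc : 0 ≤ c) (hd : 0 ≤ d) (hk : 0 < k) (hkω : k < ω)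
    (v : ℝ → ℝ) (hv : ContinuousOn v (Ici R₁))
    (hvb : ∃ B, ∀ t ≥ R₁, v t ≤ B) (hv0 : ∀ t ≥ R₁, 0 ≤ v t)
    (h : ∀ t ≥ R₁, v t ≤ c * Real.exp (-ω * (t - R₁)) +
      ∫ s in R₁..t, Real.exp (-ω * (t - s)) * (k * v s + d)) :
    (∀ t ≥ R₁, v t ≤ c * Real.exp ((k - ω) * (t - R₁)) +
      d / (ω - k) * (1 - Real.exp ((k - ω) * (t - R₁)))) ∧
    Filter.limsup v Filter.atTop ≤ d / (ω - k) := by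
  have hωk : 0 < ω - k := by linarith
  set f : ℝ → ℝ := fun s => Real.exp (ω * (s - R₁)) * (k * v s + d) with hfdef
  have hfc : ContinuousOn f (Ici R₁) := by
    apply ContinuousOn.mul
    · exact (Real.continuous_exp.comp (by continuity)).continuousOn
    · exact (continuousOn_const.mul hv).add continuousOn_const
  set w : ℝ → ℝ := fun t => ∫ s in R₁..t, f s with hwdef
  set y : ℝ → ℝ := fun t => c + w t with hydef
  -- Key inequality: e^{ω(t-R₁)} v(t) ≤ y(t)
  have hA : ∀ t ≥ R₁, Real.exp (ω * (t - R₁)) * v t ≤ y t := by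
    intro t ht
    have h2 := mul_le_mul_of_nonneg_left (h t ht) (Real.exp_pos (ω * (t - R₁))).le
    calc Real.exp (ω * (t - R₁)) * v t ≤ _ := h2
      _ = c + ∫ s in R₁..t, Real.exp (ω * (t - R₁)) *
            (Real.exp (-ω * (t - s)) * (k * v s + d)) := by
          rw [mul_add, ← intervalIntegral.integral_const_mul]
          congr 1
          rw [show Real.exp (ω * (t - R₁)) * (c * Real.exp (-ω * (t - R₁))) =
            c * (Real.exp (ω * (t - R₁)) * Real.exp (-ω * (t - R₁))) by ring,
            ← Real.exp_add, show ω * (t - R₁) + -ω * (t - R₁) = 0 by ring,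
            Real.exp_zero, mul_one]
      _ = y t := by
          rw [hydef]
          congr 1
          apply intervalIntegral.integral_congr
          intro s _
          show Real.exp (ω * (t - R₁)) * (Real.exp (-ω * (t - s)) * (k * v s + d)) = f s
          rw [hfdef, ← mul_assoc, ← Real.exp_add,
            show ω * (t - R₁) + -ω * (t - s) = ω * (s - R₁) by ring]
  -- pointwise bound
  have main : ∀ t ≥ R₁, v t ≤ c * Real.exp ((k - ω) * (t - R₁)) +
      d / (ω - k) * (1 - Real.exp ((k - ω) * (t - R₁))) := by
    intro t ht
    set g : ℝ → ℝ := fun x => Real.exp (-k * (x - R₁)) * y x -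
      d / (ω - k) * Real.exp ((ω - k) * (x - R₁)) with hgdef
    have hint : ∀ x ∈ Icc R₁ t, IntervalIntegrable f volume R₁ x := by
      intro x hx
      apply ContinuousOn.intervalIntegrable
      apply hfc.mono
      rw [uIcc_of_le hx.1]
      exact fun z hz => hz.1
    have hwcont : ContinuousOn w (Icc R₁ t) := by
      have h1 : ContinuousOn w (uIcc R₁ t) :=
        intervalIntegral.continuousOn_primitive_interval'
          (hint t (right_mem_Icc.mpr ht)) left_mem_uIcc
      rwa [uIcc_of_le ht] at h1
    have hgcont : ContinuousOn g (Icc R₁ t) := by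
      apply ContinuousOn.sub
      · exact ((Real.continuous_exp.comp (by continuity)).continuousOn).mul
          (continuousOn_const.add hwcont)
      · exact continuousOn_const.mul (Real.continuous_exp.comp (by continuity)).continuousOn
    -- derivative of g on interior
    have hgderiv : ∀ x ∈ Ioo R₁ t, HasDerivAt g
        ((-k * Real.exp (-k * (x - R₁))) * y x + Real.exp (-k * (x - R₁)) * f x -
          d / (ω - k) * ((ω - k) * Real.exp ((ω - k) * (x - R₁)))) x := by
      intro x hx
      have hw' : HasDerivAt w (f x) x := by
        apply intervalIntegral.integral_hasDerivAt_right
          (hint x ⟨hx.1.le, hx.2.le⟩)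
        · exact ((hfc.mono Ioi_subset_Ici_self).stronglyMeasurableAtFilter isOpen_Ioi x hx.1)
        · exact (hfc.continuousAt (Ici_mem_nhds hx.1))
      have hy' : HasDerivAt y (f x) x := hw'.const_add c
      have hin1 : HasDerivAt (fun x' : ℝ => -k * (x' - R₁)) (-k) x := by
        simpa using ((hasDerivAt_id x).sub_const R₁).const_mul (-k)
      have he1 : HasDerivAt (fun x' => Real.exp (-k * (x' - R₁)))
          (Real.exp (-k * (x - R₁)) * (-k)) x :=
        by have := (Real.hasDerivAt_exp (-k * (x - R₁))).comp x hin1; exact this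
      have hin2 : HasDerivAt (fun x' : ℝ => (ω - k) * (x' - R₁)) (ω - k) x := by
        simpa using ((hasDerivAt_id x).sub_const R₁).const_mul (ω - k)
      have he2 : HasDerivAt (fun x' => Real.exp ((ω - k) * (x' - R₁)))
          (Real.exp ((ω - k) * (x - R₁)) * (ω - k)) x :=
        by have := (Real.hasDerivAt_exp ((ω - k) * (x - R₁))).comp x hin2; exact this
      have := (he1.mul hy').sub (he2.const_mul (d / (ω - k)))
      exact this.congr_deriv (by ring)
    -- derivative nonpositive
    have hgderiv_le : ∀ x ∈ Ioo R₁ t, deriv g x ≤ 0 := by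
      intro x hx
      rw [(hgderiv x hx).deriv]
      have hAx := hA x hx.1.le
      have hfx : f x ≤ k * y x + d * Real.exp (ω * (x - R₁)) := by
        have hhh : f x = Real.exp (ω * (x - R₁)) * (k * v x + d) := rfl
        rw [hhh]
        nlinarith [mul_le_mul_of_nonneg_left hAx hk.le]
      have hp1 : (0:ℝ) < Real.exp (-k * (x - R₁)) := Real.exp_pos _
      have hid2 : d * (Real.exp (-k * (x - R₁)) * Real.exp (ω * (x - R₁))) =
          d * Real.exp ((ω - k) * (x - R₁)) := by
        rw [← Real.exp_add, show -k * (x - R₁) + ω * (x - R₁) = (ω - k) * (x - R₁) by ring]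
      have hdk : d / (ω - k) * ((ω - k) * Real.exp ((ω - k) * (x - R₁))) =
          d * Real.exp ((ω - k) * (x - R₁)) := by
        field_simp
      have h9 := mul_le_mul_of_nonneg_left hfx hp1.le
      clear_value f w y
      linarith [h9, hid2, hdk]
    have hanti : AntitoneOn g (Icc R₁ t) := by
      apply antitoneOn_of_deriv_nonpos (convex_Icc R₁ t) hgcont
      · intro x hx
        rw [interior_Icc] at hx
        exact ((hgderiv x hx).differentiableAt).differentiableWithinAt
      · intro x hx
        rw [interior_Icc] at hx
        exact hgderiv_le x hx
    have hgR : g R₁ = c - d / (ω - k) := by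
      simp [hgdef, hydef, hwdef, intervalIntegral.integral_same]
    have hgt : Real.exp (-k * (t - R₁)) * y t - d / (ω - k) *
        Real.exp ((ω - k) * (t - R₁)) ≤ c - d / (ω - k) := by
      have h0 : g t ≤ g R₁ := hanti (left_mem_Icc.mpr ht) (right_mem_Icc.mpr ht) ht
      rw [hgR] at h0
      exact h0
    set τ := t - R₁ with hτ
    set E := Real.exp ((k - ω) * τ) with hE
    have hEpos : (0:ℝ) < E := Real.exp_pos _
    have idA : E * Real.exp (-k * τ) = Real.exp (-ω * τ) := by
      rw [hE, ← Real.exp_add, show (k - ω) * τ + -k * τ = -ω * τ by ring]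
    have idB : E * Real.exp ((ω - k) * τ) = 1 := by
      rw [hE, ← Real.exp_add, show (k - ω) * τ + (ω - k) * τ = 0 by ring, Real.exp_zero]
    have h5 := mul_le_mul_of_nonneg_left hgt hEpos.le
    have key : E * (Real.exp (-k * τ) * y t - d / (ω - k) * Real.exp ((ω - k) * τ)) =
        (E * Real.exp (-k * τ)) * y t - d / (ω - k) * (E * Real.exp ((ω - k) * τ)) := by
      ring
    rw [key, idA, idB, mul_one] at h5
    have hvy : v t ≤ Real.exp (-ω * τ) * y t := by
      have h6 := mul_le_mul_of_nonneg_left (hA t ht) (Real.exp_pos (-ω * τ)).le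
      have hid : Real.exp (-ω * τ) * (Real.exp (ω * τ) * v t) = v t := by
        rw [← mul_assoc, ← Real.exp_add, show -ω * τ + ω * τ = 0 by ring,
          Real.exp_zero, one_mul]
      clear_value f w y E
      linarith [h6, hid.ge, hid.le]
    clear_value f w y E
    linarith [hvy, h5]
  refine ⟨main, ?_⟩
  -- limsup bound
  set b : ℝ → ℝ := fun t => c * Real.exp ((k - ω) * (t - R₁)) +
    d / (ω - k) * (1 - Real.exp ((k - ω) * (t - R₁))) with hbdef
  have htend : Tendsto b atTop (nhds (d / (ω - k))) := by
    have h1 : Tendsto (fun t => (k - ω) * (t - R₁)) atTop atBot := by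
      apply Tendsto.const_mul_atTop_of_neg (by linarith : k - ω < 0)
      simpa [sub_eq_add_neg] using tendsto_atTop_add_const_right atTop (-R₁) tendsto_id
    have h2 : Tendsto (fun t => Real.exp ((k - ω) * (t - R₁))) atTop (nhds 0) :=
      Real.tendsto_exp_atBot.comp h1
    have h3 : Tendsto b atTop (nhds (c * 0 + d / (ω - k) * (1 - 0))) :=
      (h2.const_mul c).add ((tendsto_const_nhds.sub h2).const_mul (d / (ω - k)))
    simpa using h3
  calc limsup v atTop ≤ limsup b atTop := by
        apply limsup_le_limsup
        · filter_upwards [eventually_ge_atTop R₁] with t ht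
          exact main t ht
        · apply Filter.IsBoundedUnder.isCoboundedUnder_le
          refine ⟨0, ?_⟩
          rw [Filter.eventually_map]
          filter_upwards [eventually_ge_atTop R₁] with t ht using hv0 t ht
        · exact htend.isBoundedUnder_le
      _ = d / (ω - k) := htend.limsup_eq
end
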